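/- arXiv:1009.1067 — 4 statements merged into one kernel-verified Lean document; each statement's English description precedes it below -/
import Mathlib

section
/- Let z ∈ ℍ and s, s', w ∈ ℂ with Re(s) > 1, Re(s') > 1, Re(w) > 2−2·Re(s) and Re(w) > 2−2·Re(s'). Then the non-holomorphic double Eisenstein series ℰ(z,w;s,s') converges absolutely, uniformly for z, w, s, s' in compact sets satisfying these constraints. -/
noncomputable section

open Complex Filter MeasureTheory

abbrev SL2Z := Matrix.SpecialLinearGroup (Fin 2) ℤ
abbrev SL2R := Matrix.SpecialLinearGroup (Fin 2) ℝ

/-- `j(γ,z) = cz+d` for `γ ∈ SL(2,ℤ)`. -/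
def jZ (γ : SL2Z) (z : ℂ) : ℂ := ((γ 1 0 : ℤ) : ℂ) * z + ((γ 1 1 : ℤ) : ℂ)

/-- The Möbius action `γz = (az+b)/(cz+d)` for `γ ∈ SL(2,ℤ)`. -/
def actZ (γ : SL2Z) (z : ℂ) : ℂ := (((γ 0 0 : ℤ) : ℂ) * z + ((γ 0 1 : ℤ) : ℂ)) / jZ γ z

/-- `j(γ,z) = cz+d` for `γ ∈ SL(2,ℝ)`. -/
def jR (γ : SL2R) (z : ℂ) : ℂ := ((γ 1 0 : ℝ) : ℂ) * z + ((γ 1 1 : ℝ) : ℂ)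

/-- The Möbius action for `γ ∈ SL(2,ℝ)`. -/
def actR (γ : SL2R) (z : ℂ) : ℂ := (((γ 0 0 : ℝ) : ℂ) * z + ((γ 0 1 : ℝ) : ℂ)) / jR γ z

/-- Coprime pairs `(c,d)`, parametrizing the cosets `B\Γ` via the bottom row. -/
def CP : Type := {p : ℤ × ℤ // IsCoprime p.1 p.2}

/-- Coprime pairs with normalized sign, parametrizing `Γ∞\Γ` via the bottom row. -/
def CP1 : Type := {p : ℤ × ℤ // IsCoprime p.1 p.2 ∧ (0 < p.1 ∨ (p.1 = 0 ∧ 0 < p.2))}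

/-- `j(γ,z) = cz+d` in terms of the bottom row. -/
def jP (p : ℤ × ℤ) (z : ℂ) : ℂ := (p.1 : ℂ) * z + (p.2 : ℂ)

/-- `c_{γδ⁻¹} = c_γ d_δ − d_γ c_δ` in terms of the bottom rows of `γ, δ`. -/
def crossP (p q : ℤ × ℤ) : ℤ := p.1 * q.2 - p.2 * q.1

/-- `Im(γz) = Im z / |cz+d|²` in terms of the bottom row of `γ`. -/
def imP (p : ℤ × ℤ) (z : ℂ) : ℝ := z.im / Complex.normSq (jP p z)

/-- A representative Möbius action for a coset with bottom row the coprime pair `(c,d)`: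
choosing `a, b` with `ad−bc = 1`, return `(az+b)/(cz+d)`. -/
def mobiusP (p : ℤ × ℤ) (h : IsCoprime p.1 p.2) (z : ℂ) : ℂ :=
  ((h.choose_spec.choose : ℂ) * z - (h.choose : ℂ)) / jP p z

def mobiusCP (p : CP) (z : ℂ) : ℂ := mobiusP p.1 p.2 z
def mobiusCP1 (p : CP1) (z : ℂ) : ℂ := mobiusP p.1 p.2.1 z

/-- The term of the double Eisenstein series `E_{s,k-s}(z,w)`. -/
def dblEisTerm (k : ℤ) (s w : ℂ) (z : ℂ) (pq : CP × CP) : ℂ :=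
  if 0 < crossP pq.1.1 pq.2.1 then
    ((crossP pq.1.1 pq.2.1 : ℤ) : ℂ) ^ (w - 1) * (jP pq.1.1 z / jP pq.2.1 z) ^ (-s) *
      (jP pq.2.1 z) ^ (-k)
  else 0

/-- The double Eisenstein series `E_{s,k-s}(z,w)`. -/
def dblEis (k : ℤ) (s w : ℂ) (z : ℂ) : ℂ := ∑' pq : CP × CP, dblEisTerm k s w z pq

/-- The completing factor for `E*_{s,k-s}(z,w)`. -/
def eisFactor (k : ℤ) (s w : ℂ) : ℂ :=
  Complex.exp (s * Real.pi * I / 2) * Complex.Gamma s * Complex.Gamma ((k : ℂ) - s) *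
      Complex.Gamma ((k : ℂ) - w) * riemannZeta (1 - w + s) * riemannZeta (1 - w + (k : ℂ) - s) /
    ((2 : ℂ) ^ ((3 : ℂ) - w) * (Real.pi : ℂ) ^ ((k : ℂ) + 1 - w) * Complex.Gamma ((k : ℂ) - 1))

/-- The completed double Eisenstein series `E*_{s,k-s}(z,w)`. -/
def dblEisStar (k : ℤ) (s w : ℂ) (z : ℂ) : ℂ := eisFactor k s w * dblEis k s w z

/-- The weight-`k` Hecke operator `T_n`. -/
def hecke (k : ℤ) (n : ℕ) (f : ℂ → ℂ) (z : ℂ) : ℂ :=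
  (n : ℂ) ^ (k - 1) * ∑ p ∈ n.divisorsAntidiagonal,
    ((p.2 : ℕ) : ℂ) ^ (-k) * ∑ b ∈ Finset.range p.2, f (((p.1 : ℂ) * z + (b : ℂ)) / (p.2 : ℂ))

/-- The completed `L`-function `L*(f,s) = ∫_0^∞ f(iy) y^{s-1} dy`. -/
def Lstar (f : ℂ → ℂ) (s : ℂ) : ℂ := ∫ y in Set.Ioi (0 : ℝ), f ((y : ℂ) * I) * (y : ℂ) ^ (s - 1)

/-- The twisted completed `L`-function `L*(f,s;x) = ∫_0^∞ f(iy+x) y^{s-1} dy`. -/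
def LstarT (f : ℂ → ℂ) (s : ℂ) (x : ℚ) : ℂ :=
  ∫ y in Set.Ioi (0 : ℝ), f ((x : ℂ) + (y : ℂ) * I) * (y : ℂ) ^ (s - 1)

/-- The standard fundamental domain for `SL(2,ℤ)\ℍ`, as a subset of `ℝ²`. -/
def fundDom : Set (ℝ × ℝ) := {p | 0 < p.2 ∧ |p.1| ≤ 1 / 2 ∧ 1 ≤ p.1 ^ 2 + p.2 ^ 2}

/-- The Petersson inner product `⟨g,f⟩ = ∫_F g(z) conj(f(z)) y^k dx dy / y²`. -/
def petersson (k : ℤ) (g f : ℂ → ℂ) : ℂ :=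
  ∫ p in fundDom, g ((p.1 : ℂ) + (p.2 : ℂ) * I) * (starRingEnd ℂ) (f ((p.1 : ℂ) + (p.2 : ℂ) * I)) *
    ((p.2 : ℂ)) ^ (k - 2)

/-- `f` is a normalized Hecke eigenform of weight `k` for `SL(2,ℤ)`, with Fourier
coefficients `a`. -/
structure IsHeckeEigenform (k : ℤ) (f : ℂ → ℂ) (a : ℕ → ℂ) : Prop where
  holo : DifferentiableOn ℂ f {z : ℂ | 0 < z.im}
  transform : ∀ γ : SL2Z, ∀ z : ℂ, 0 < z.im → f (actZ γ z) = jZ γ z ^ k * f z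
  expansion : ∀ z : ℂ, 0 < z.im →
    HasSum (fun n : ℕ => a n * Complex.exp (2 * Real.pi * I * (n : ℂ) * z)) (f z)
  cusp : a 0 = 0
  normalized : a 1 = 1
  eigen : ∀ n : ℕ, 0 < n → ∃ lam : ℂ, ∀ z : ℂ, 0 < z.im → hecke k n f z = lam * f z

/-- The generalized Cohen kernel `C_k(z,s;x)`. -/
def cohen (k : ℤ) (s : ℂ) (x : ℚ) (z : ℂ) : ℂ :=
  (1 / 2) * ∑' γ : SL2Z, (actZ γ z + (x : ℂ)) ^ (-s) * (jZ γ z) ^ (-k)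

/-- The Poincaré series `P_k(z;m)` (over `Γ∞\Γ`). -/
def poincare (k : ℤ) (m : ℕ) (z : ℂ) : ℂ :=
  ∑' p : CP1, Complex.exp (2 * Real.pi * I * (m : ℂ) * mobiusCP1 p z) * (jP p.1 z) ^ (-k)

/-- The series `Q_k(z,l;m)`. -/
def Qser (k : ℤ) (l m : ℕ) (z : ℂ) : ℂ :=
  if l = 0 then poincare k m z
  else (1 / 2) * ∑' p : CP, Complex.exp (2 * Real.pi * I * (m : ℂ) * mobiusCP p z) *
    ((p.1.1 : ℂ)) ^ l * (jP p.1 z) ^ (-(k + (l : ℤ)))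

/-- The Rankin–Cohen bracket `[g₁,g₂]_n` of weights `k₁, k₂`. -/
def RC (k₁ k₂ n : ℕ) (g₁ g₂ : ℂ → ℂ) (z : ℂ) : ℂ :=
  ∑ r ∈ Finset.range (n + 1), (-1 : ℂ) ^ r * (Nat.choose (k₁ + n - 1) (n - r) : ℂ) *
    (Nat.choose (k₂ + n - 1) r : ℂ) * iteratedDeriv r g₁ z * iteratedDeriv (n - r) g₂ z

/-- The coefficient `A_{k₁,k₂}(l,u)_n`. -/
def Acoef (k₁ k₂ l u n : ℕ) : ℂ :=
  ((Nat.factorial (k₁ + n - 1) * Nat.factorial (k₂ + n - 1) : ℕ) : ℂ) /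
    ((Nat.factorial l * Nat.factorial u * Nat.factorial (n - l - u) *
      Nat.factorial (k₁ + l - 1) * Nat.factorial (k₂ + u - 1) : ℕ) : ℂ)

/-- The term of the double Poincaré series. -/
def dblPoinTerm (k₁ k₂ : ℤ) (w : ℂ) (m₁ m₂ : ℕ) (z : ℂ) (pq : CP × CP) : ℂ :=
  if 0 < crossP pq.1.1 pq.2.1 then
    ((crossP pq.1.1 pq.2.1 : ℤ) : ℂ) ^ (w - 1) *
      Complex.exp (2 * Real.pi * I * ((m₁ : ℂ) * mobiusCP pq.1 z + (m₂ : ℂ) * mobiusCP pq.2 z)) *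
      (jP pq.1.1 z) ^ (-k₁) * (jP pq.2.1 z) ^ (-k₂)
  else 0

/-- The double Poincaré series `P_{k₁,k₂}(z,w;m₁,m₂)`. -/
def dblPoin (k₁ k₂ : ℤ) (w : ℂ) (m₁ m₂ : ℕ) (z : ℂ) : ℂ :=
  ∑' pq : CP × CP, dblPoinTerm k₁ k₂ w m₁ m₂ z pq

/-- The double Eisenstein series `E_{k₁,k₂}(z,w)` with two integral weights. -/
def dblEis2 (k₁ k₂ : ℤ) (w : ℂ) (z : ℂ) : ℂ :=
  ∑' pq : CP × CP, if 0 < crossP pq.1.1 pq.2.1 then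
    ((crossP pq.1.1 pq.2.1 : ℤ) : ℂ) ^ (w - 1) * (jP pq.1.1 z) ^ (-k₁) * (jP pq.2.1 z) ^ (-k₂)
  else 0

/-- `f` transforms with weight `k` under `SL(2,ℤ)`. -/
def IsWeaklyModular (k : ℤ) (f : ℂ → ℂ) : Prop :=
  ∀ γ : SL2Z, ∀ z : ℂ, 0 < z.im → f (actZ γ z) = jZ γ z ^ k * f z

/-- `f` is a holomorphic modular form of weight `k` for `SL(2,ℤ)`. -/
def IsModularForm (k : ℤ) (f : ℂ → ℂ) : Prop :=
  DifferentiableOn ℂ f {z : ℂ | 0 < z.im} ∧ IsWeaklyModular k f ∧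
    ∃ C A : ℝ, ∀ z : ℂ, A ≤ z.im → ‖f z‖ ≤ C

/-- `f` is a holomorphic cusp form of weight `k` for `SL(2,ℤ)`. -/
def IsCuspForm (k : ℤ) (f : ℂ → ℂ) : Prop :=
  DifferentiableOn ℂ f {z : ℂ | 0 < z.im} ∧ IsWeaklyModular k f ∧
    Tendsto f (comap Complex.im atTop) (nhds 0)

/-- The term of the non-holomorphic kernel `K(z;s,s')`. -/
def KkerTerm (z s s' : ℂ) (γ : SL2Z) : ℂ :=
  (((actZ γ z).im : ℝ) : ℂ) ^ (s + s') / ((‖actZ γ z‖ : ℝ) : ℂ) ^ (2 * s)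

/-- The non-holomorphic kernel `K(z;s,s') = (1/2) Σ_{γ ∈ SL(2,ℤ)} Im(γz)^{s+s'}/|γz|^{2s}`. -/
def Kker (z s s' : ℂ) : ℂ := (1 / 2) * ∑' γ : SL2Z, KkerTerm z s s' γ

/-- The term of the non-holomorphic double Eisenstein series `ℰ(z,w;s,s')`. -/
def nhTerm (w s s' : ℂ) (z : ℂ) (pq : CP1 × CP1) : ℂ :=
  if crossP pq.1.1 pq.2.1 ≠ 0 then
    ((imP pq.1.1 z : ℝ) : ℂ) ^ s * ((imP pq.2.1 z : ℝ) : ℂ) ^ s' *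
      ((|crossP pq.1.1 pq.2.1| : ℤ) : ℂ) ^ (-w)
  else 0

/-- The non-holomorphic double Eisenstein series `ℰ(z,w;s,s')`. -/
def nhE (z : ℂ) (w s s' : ℂ) : ℂ := ∑' pq : CP1 × CP1, nhTerm w s s' z pq

/-- `g` is a cusp form of weight `k` with Fourier coefficients `b`. -/
structure IsCuspFormWithCoeffs (k : ℤ) (g : ℂ → ℂ) (b : ℕ → ℂ) : Prop where
  holo : DifferentiableOn ℂ g {z : ℂ | 0 < z.im}
  transform : ∀ γ : SL2Z, ∀ z : ℂ, 0 < z.im → g (actZ γ z) = jZ γ z ^ k * g z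
  expansion : ∀ z : ℂ, 0 < z.im →
    HasSum (fun n : ℕ => b n * Complex.exp (2 * Real.pi * I * (n : ℂ) * z)) (g z)
  czero : b 0 = 0

/-- The term of the quadruple-sum form of the double Eisenstein series:
`(ad−bc)^{w−1} ((az+b)/(cz+d))^{−s} (cz+d)^{−k}` for `ad−bc > 0`. -/
def quadTerm (k : ℤ) (s w : ℂ) (z : ℂ) (v : ℤ × ℤ × ℤ × ℤ) : ℂ :=
  if 0 < v.1 * v.2.2.2 - v.2.1 * v.2.2.1 then
    ((v.1 * v.2.2.2 - v.2.1 * v.2.2.1 : ℤ) : ℂ) ^ (w - 1) *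
      (((v.1 : ℂ) * z + (v.2.1 : ℂ)) / ((v.2.2.1 : ℂ) * z + (v.2.2.2 : ℂ))) ^ (-s) *
      ((v.2.2.1 : ℂ) * z + (v.2.2.2 : ℂ)) ^ (-k)
  else 0

/-- The twisted version: `(ad−bc)^{w−1} ((az+b)/(cz+d) + x)^{−s} (cz+d)^{−k}` for `ad−bc > 0`. -/
def quadTermT (k : ℤ) (s w : ℂ) (x : ℚ) (z : ℂ) (v : ℤ × ℤ × ℤ × ℤ) : ℂ :=
  if 0 < v.1 * v.2.2.2 - v.2.1 * v.2.2.1 then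
    ((v.1 * v.2.2.2 - v.2.1 * v.2.2.1 : ℤ) : ℂ) ^ (w - 1) *
      (((v.1 : ℂ) * z + (v.2.1 : ℂ)) / ((v.2.2.1 : ℂ) * z + (v.2.2.2 : ℂ)) + (x : ℂ)) ^ (-s) *
      ((v.2.2.1 : ℂ) * z + (v.2.2.2 : ℂ)) ^ (-k)
  else 0


/-! ### Auxiliary lemmas for statement2 -/

namespace Statement2Aux

open Real

/-- Squared euclidean size of an integer pair. -/
def npr (p : ℤ × ℤ) : ℝ := (p.1 : ℝ) ^ 2 + (p.2 : ℝ) ^ 2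

/-- A comparison constant depending only on `z`. -/
def Mzz (z : ℂ) : ℝ := max ((1 + 2 * z.re ^ 2) / z.im ^ 2) 2

lemma jP_re (p : ℤ × ℤ) (z : ℂ) : (jP p z).re = (p.1 : ℝ) * z.re + (p.2 : ℝ) := by
  simp [jP]

lemma jP_im (p : ℤ × ℤ) (z : ℂ) : (jP p z).im = (p.1 : ℝ) * z.im := by
  simp [jP]

lemma jP_ne_zero (p : ℤ × ℤ) (hp : IsCoprime p.1 p.2) (z : ℂ) (hz : 0 < z.im) :
    jP p z ≠ 0 := by
  intro h
  have h1 : (p.1 : ℝ) * z.im = 0 := by rw [← jP_im, h]; simp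
  have h2 : p.1 = 0 := by
    rcases mul_eq_zero.mp h1 with h | h
    · exact_mod_cast h
    · exact absurd h (ne_of_gt hz)
  have h3 : p.2 = 0 := by
    have h4 : (p.1 : ℝ) * z.re + (p.2 : ℝ) = 0 := by rw [← jP_re, h]; simp
    rw [h2] at h4
    have h5 : (p.2 : ℝ) = 0 := by push_cast at h4; linarith
    exact_mod_cast h5
  rw [h2, h3] at hp
  exact not_isCoprime_zero_zero hp

lemma one_le_npr (p : ℤ × ℤ) (hp : IsCoprime p.1 p.2) : 1 ≤ npr p := by
  have h : p.1 ≠ 0 ∨ p.2 ≠ 0 := by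
    by_contra h
    push_neg at h
    rw [h.1, h.2] at hp
    exact not_isCoprime_zero_zero hp
  unfold npr
  rcases h with h | h
  · have h5 : (1:ℤ) ≤ p.1 ^ 2 := by rcases h.lt_or_gt with h | h <;> nlinarith
    have h6 : (1:ℝ) ≤ (p.1:ℝ) ^ 2 := by exact_mod_cast h5
    nlinarith [sq_nonneg (p.2 : ℝ)]
  · have h5 : (1:ℤ) ≤ p.2 ^ 2 := by rcases h.lt_or_gt with h | h <;> nlinarith
    have h6 : (1:ℝ) ≤ (p.2:ℝ) ^ 2 := by exact_mod_cast h5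
    nlinarith [sq_nonneg (p.1 : ℝ)]

lemma two_le_Mzz (z : ℂ) : 2 ≤ Mzz z := le_max_right _ _

lemma npr_le (p : ℤ × ℤ) (z : ℂ) (hz : 0 < z.im) :
    npr p ≤ Mzz z * ‖jP p z‖ ^ 2 := by
  have h1 : ‖jP p z‖ ^ 2
      = ((p.1:ℝ) * z.re + (p.2:ℝ)) ^ 2 + ((p.1:ℝ) * z.im) ^ 2 := by
    rw [Complex.sq_norm, Complex.normSq_apply, jP_re, jP_im]; ring
  have h2 : (1 + 2 * z.re ^ 2) / z.im ^ 2 ≤ Mzz z := le_max_left _ _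
  have h3 : (2:ℝ) ≤ Mzz z := le_max_right _ _
  have h4 : 1 + 2 * z.re ^ 2 ≤ Mzz z * z.im ^ 2 := by
    rw [div_le_iff₀ (by positivity)] at h2; linarith
  rw [h1]
  unfold npr
  nlinarith [sq_nonneg (2 * (p.1:ℝ) * z.re + (p.2:ℝ)),
    mul_le_mul_of_nonneg_left h4 (sq_nonneg (p.1:ℝ)),
    mul_le_mul_of_nonneg_left h3 (sq_nonneg ((p.1:ℝ) * z.re + (p.2:ℝ)))]

lemma cross_bound (p q : ℤ × ℤ) (z : ℂ) (hz : 0 < z.im) :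
    |(crossP p q : ℝ)| * z.im ≤ ‖jP p z‖ * ‖jP q z‖ := by
  have key : (jP p z * (starRingEnd ℂ) (jP q z)).im = (crossP p q : ℝ) * z.im := by
    simp only [Complex.mul_im, Complex.conj_re, Complex.conj_im, jP_re, jP_im, crossP]
    push_cast; ring
  have h := Complex.abs_im_le_norm (jP p z * (starRingEnd ℂ) (jP q z))
  rw [key, norm_mul, Complex.norm_conj, abs_mul, abs_of_pos hz] at h
  exact h

lemma rpow_chain (σ σ' ω a y ap aq N np nq Mz : ℝ)
    (hy : 0 < y) (hap : 0 < ap) (haq : 0 < aq) (hN : 1 ≤ N)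
    (hnp1 : 1 ≤ np) (hnq1 : 1 ≤ nq) (hMz : 1 ≤ Mz)
    (hMnp : np ≤ Mz * ap ^ 2) (hMnq : nq ≤ Mz * aq ^ 2)
    (hcross : N * y ≤ ap * aq)
    (hωa : -ω ≤ a) (ha0 : 0 ≤ a) (he1 : 0 ≤ 2 * σ - a) (he2 : 0 ≤ 2 * σ' - a) :
    (y / ap ^ 2) ^ σ * (y / aq ^ 2) ^ σ' * N ^ (-ω) ≤
      y ^ (σ + σ' - a) * Mz ^ ((2 * σ - a + (2 * σ' - a)) / 2) *
        (np ^ (-((2 * σ - a) / 2)) * nq ^ (-((2 * σ' - a) / 2))) := by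
  have hN0 : 0 < N := lt_of_lt_of_le one_pos hN
  have hnp0 : 0 < np := lt_of_lt_of_le one_pos hnp1
  have hnq0 : 0 < nq := lt_of_lt_of_le one_pos hnq1
  have hMz0 : 0 < Mz := lt_of_lt_of_le one_pos hMz
  have h1 : 0 < y / ap ^ 2 := by positivity
  have h2 : 0 < y / aq ^ 2 := by positivity
  rw [rpow_def_of_pos h1, rpow_def_of_pos h2, rpow_def_of_pos hN0, rpow_def_of_pos hy,
    rpow_def_of_pos hMz0, rpow_def_of_pos hnp0, rpow_def_of_pos hnq0,
    ← Real.exp_add, ← Real.exp_add, ← Real.exp_add, ← Real.exp_add, ← Real.exp_add,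
    Real.exp_le_exp,
    Real.log_div (ne_of_gt hy) (by positivity), Real.log_div (ne_of_gt hy) (by positivity),
    Real.log_pow, Real.log_pow]
  have lN : 0 ≤ Real.log N := Real.log_nonneg hN
  have lnp : 0 ≤ Real.log np := Real.log_nonneg hnp1
  have lnq : 0 ≤ Real.log nq := Real.log_nonneg hnq1
  have lMz : 0 ≤ Real.log Mz := Real.log_nonneg hMz
  have hc : Real.log N + Real.log y ≤ Real.log ap + Real.log aq := by
    have := Real.log_le_log (by positivity) hcross
    rwa [Real.log_mul (ne_of_gt hN0) (ne_of_gt hy),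
      Real.log_mul (ne_of_gt hap) (ne_of_gt haq)] at this
  have hp : Real.log np ≤ Real.log Mz + 2 * Real.log ap := by
    have := Real.log_le_log hnp0 hMnp
    rwa [Real.log_mul (ne_of_gt hMz0) (by positivity), Real.log_pow] at this
  have hq : Real.log nq ≤ Real.log Mz + 2 * Real.log aq := by
    have := Real.log_le_log hnq0 hMnq
    rwa [Real.log_mul (ne_of_gt hMz0) (by positivity), Real.log_pow] at this
  nlinarith [mul_nonneg (by linarith : (0:ℝ) ≤ a + ω) lN,
    mul_nonneg ha0 (by linarith : (0:ℝ) ≤ Real.log ap + Real.log aq - Real.log y - Real.log N),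
    mul_nonneg he1 (by linarith : (0:ℝ) ≤ Real.log Mz + 2 * Real.log ap - Real.log np),
    mul_nonneg he2 (by linarith : (0:ℝ) ≤ Real.log Mz + 2 * Real.log aq - Real.log nq)]

/-- The master pointwise bound for `nhTerm`. -/
lemma key_bound (z w s s' : ℂ) (hz : 0 < z.im)
    (he1 : 0 ≤ 2 * s.re - max (-w.re) 0) (he2 : 0 ≤ 2 * s'.re - max (-w.re) 0)
    (pq : CP1 × CP1) :
    ‖nhTerm w s s' z pq‖ ≤
      z.im ^ (s.re + s'.re - max (-w.re) 0) *
        Mzz z ^ ((2 * s.re - max (-w.re) 0 + (2 * s'.re - max (-w.re) 0)) / 2) *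
        (npr pq.1.1 ^ (-((2 * s.re - max (-w.re) 0) / 2)) *
          npr pq.2.1 ^ (-((2 * s'.re - max (-w.re) 0) / 2))) := by
  have hMz0 : 0 < Mzz z := lt_of_lt_of_le two_pos (two_le_Mzz z)
  have hnp1 : 1 ≤ npr pq.1.1 := one_le_npr _ pq.1.2.1
  have hnq1 : 1 ≤ npr pq.2.1 := one_le_npr _ pq.2.2.1
  have hRHS : 0 ≤ z.im ^ (s.re + s'.re - max (-w.re) 0) *
      Mzz z ^ ((2 * s.re - max (-w.re) 0 + (2 * s'.re - max (-w.re) 0)) / 2) *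
      (npr pq.1.1 ^ (-((2 * s.re - max (-w.re) 0) / 2)) *
        npr pq.2.1 ^ (-((2 * s'.re - max (-w.re) 0) / 2))) := by
    apply mul_nonneg (mul_nonneg (Real.rpow_nonneg hz.le _) (Real.rpow_nonneg hMz0.le _))
    exact mul_nonneg (Real.rpow_nonneg (by linarith) _) (Real.rpow_nonneg (by linarith) _)
  rw [nhTerm]
  split_ifs with hcr
  · -- main case
    have hjp : jP pq.1.1 z ≠ 0 := jP_ne_zero _ pq.1.2.1 z hz
    have hjq : jP pq.2.1 z ≠ 0 := jP_ne_zero _ pq.2.2.1 z hz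
    have hap : 0 < ‖jP pq.1.1 z‖ := norm_pos_iff.mpr hjp
    have haq : 0 < ‖jP pq.2.1 z‖ := norm_pos_iff.mpr hjq
    have himp : imP pq.1.1 z = z.im / ‖jP pq.1.1 z‖ ^ 2 := by
      rw [imP, ← Complex.sq_norm]
    have himq : imP pq.2.1 z = z.im / ‖jP pq.2.1 z‖ ^ 2 := by
      rw [imP, ← Complex.sq_norm]
    have himp0 : 0 < imP pq.1.1 z := by rw [himp]; positivity
    have himq0 : 0 < imP pq.2.1 z := by rw [himq]; positivity
    have hN1 : (1:ℝ) ≤ ((|crossP pq.1.1 pq.2.1| : ℤ) : ℝ) := by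
      exact_mod_cast Int.one_le_abs hcr
    have hN0 : (0:ℝ) < ((|crossP pq.1.1 pq.2.1| : ℤ) : ℝ) := lt_of_lt_of_le one_pos hN1
    have e1 : ‖((imP pq.1.1 z : ℝ) : ℂ) ^ s‖ = imP pq.1.1 z ^ s.re := by
      rw [Complex.norm_cpow_eq_rpow_re_of_pos himp0]
    have e2 : ‖((imP pq.2.1 z : ℝ) : ℂ) ^ s'‖ = imP pq.2.1 z ^ s'.re := by
      rw [Complex.norm_cpow_eq_rpow_re_of_pos himq0]
    have e3 : ‖((|crossP pq.1.1 pq.2.1| : ℤ) : ℂ) ^ (-w)‖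
        = ((|crossP pq.1.1 pq.2.1| : ℤ) : ℝ) ^ (-w.re) := by
      have hb : ((|crossP pq.1.1 pq.2.1| : ℤ) : ℂ)
          = (((|crossP pq.1.1 pq.2.1| : ℤ) : ℝ) : ℂ) := by norm_cast
      rw [hb, Complex.norm_cpow_eq_rpow_re_of_pos hN0, Complex.neg_re]
    rw [norm_mul, norm_mul, e1, e2, e3, himp, himq]
    have hcross : ((|crossP pq.1.1 pq.2.1| : ℤ) : ℝ) * z.im
        ≤ ‖jP pq.1.1 z‖ * ‖jP pq.2.1 z‖ := by
      have := cross_bound pq.1.1 pq.2.1 z hz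
      rwa [← Int.cast_abs] at this
    exact rpow_chain s.re s'.re w.re (max (-w.re) 0) z.im _ _ _ _ _ _ hz hap haq hN1
      hnp1 hnq1 (by linarith [two_le_Mzz z]) (npr_le _ z hz) (npr_le _ z hz) hcross
      (le_max_left _ _) (le_max_right _ _) he1 he2
  · simpa using hRHS

lemma summable_npr (t : ℝ) (ht : 2 < t) :
    Summable fun p : CP1 => npr p.1 ^ (-(t / 2)) := by
  have hbase := EisensteinSeries.summable_one_div_norm_rpow ht
  have hinj : Function.Injective (fun p : CP1 => (![p.1.1, p.1.2] : Fin 2 → ℤ)) := by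
    intro p q h
    have h0 := congrFun h 0
    have h1 := congrFun h 1
    simp only [Matrix.cons_val_zero, Matrix.cons_val_one, Matrix.head_cons] at h0 h1
    exact Subtype.ext (Prod.ext h0 h1)
  have hsum := hbase.comp_injective hinj
  refine Summable.of_nonneg_of_le (fun p => Real.rpow_nonneg ?_ _) (fun p => ?_) hsum
  · have := one_le_npr p.1 p.2.1; linarith
  · set v : Fin 2 → ℤ := ![p.1.1, p.1.2] with hv
    have hnorm : ‖v‖ ≤ Real.sqrt (npr p.1) := by
      rw [pi_norm_le_iff_of_nonneg (Real.sqrt_nonneg _)]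
      intro i
      fin_cases i
      · show ‖(p.1.1 : ℤ)‖ ≤ _
        rw [Int.norm_eq_abs, ← Real.sqrt_sq_eq_abs]
        exact Real.sqrt_le_sqrt (by unfold npr; push_cast; nlinarith [sq_nonneg ((p.1.2 : ℝ))])
      · show ‖(p.1.2 : ℤ)‖ ≤ _
        rw [Int.norm_eq_abs, ← Real.sqrt_sq_eq_abs]
        exact Real.sqrt_le_sqrt (by unfold npr; push_cast; nlinarith [sq_nonneg ((p.1.1 : ℝ))])
    have hpos : 0 < ‖v‖ := by
      rcases p.2.2 with hc | ⟨h0, hd⟩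
      · have h1 : (1:ℝ) ≤ ‖v 0‖ := by
          show (1:ℝ) ≤ ‖(p.1.1 : ℤ)‖
          rw [Int.norm_eq_abs]
          exact_mod_cast Int.one_le_abs (ne_of_gt hc)
        linarith [norm_le_pi_norm v 0]
      · have h1 : (1:ℝ) ≤ ‖v 1‖ := by
          show (1:ℝ) ≤ ‖(p.1.2 : ℤ)‖
          rw [Int.norm_eq_abs]
          exact_mod_cast Int.one_le_abs (ne_of_gt hd)
        linarith [norm_le_pi_norm v 1]
    have hsq : ‖v‖ ^ 2 ≤ npr p.1 := by
      have h2 := pow_le_pow_left₀ (norm_nonneg v) hnorm 2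
      rwa [Real.sq_sqrt (by have := one_le_npr p.1 p.2.1; linarith)] at h2
    have heq : (‖v‖ ^ 2 : ℝ) ^ (-(t / 2)) = ‖v‖ ^ (-t) := by
      rw [← Real.rpow_natCast ‖v‖ 2, ← Real.rpow_mul (norm_nonneg v)]
      congr 1
      push_cast
      ring
    calc npr p.1 ^ (-(t / 2)) ≤ (‖v‖ ^ 2 : ℝ) ^ (-(t / 2)) :=
          Real.rpow_le_rpow_of_nonpos (by positivity) hsq (by linarith)
      _ = ‖v‖ ^ (-t) := heq

lemma exp_gt (sre wre : ℝ) (hs : 1 < sre) (hw : 2 - 2 * sre < wre) :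
    2 < 2 * sre - max (-wre) 0 := by
  rcases max_cases (-wre) (0:ℝ) with ⟨h, -⟩ | ⟨h, -⟩ <;> rw [h] <;> linarith

end Statement2Aux

set_option maxHeartbeats 1000000 in
/-- absolute convergence of the non-holomorphic double Eisenstein series
`ℰ(z,w;s,s')` for `Re s, Re s' > 1`, `Re w > 2-2Re s`, `Re w > 2-2Re s'`, uniformly on
compact subsets of the parameter region. -/
theorem statement2 :
    (∀ z w s s' : ℂ, 0 < z.im → 1 < s.re → 1 < s'.re →
      2 - 2 * s.re < w.re → 2 - 2 * s'.re < w.re →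
      Summable fun pq : CP1 × CP1 => ‖nhTerm w s s' z pq‖) ∧
    (∀ K : Set (ℂ × ℂ × ℂ × ℂ),
      K ⊆ {x : ℂ × ℂ × ℂ × ℂ | 0 < x.1.im ∧ 1 < x.2.2.1.re ∧ 1 < x.2.2.2.re ∧
        2 - 2 * x.2.2.1.re < x.2.1.re ∧ 2 - 2 * x.2.2.2.re < x.2.1.re} →
      IsCompact K →
      TendstoUniformlyOn
        (fun (F : Finset (CP1 × CP1)) (x : ℂ × ℂ × ℂ × ℂ) =>
          ∑ pq ∈ F, nhTerm x.2.1 x.2.2.1 x.2.2.2 x.1 pq)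
        (fun x => nhE x.1 x.2.1 x.2.2.1 x.2.2.2) atTop K) := by
  classical
  constructor
  · intro z w s s' hz hs hs' hw hw'
    have he1 := Statement2Aux.exp_gt s.re w.re hs hw
    have he2 := Statement2Aux.exp_gt s'.re w.re hs' hw'
    have S1 := Statement2Aux.summable_npr _ he1
    have S2 := Statement2Aux.summable_npr _ he2
    have Sprod : Summable fun pq : CP1 × CP1 =>
        Statement2Aux.npr pq.1.1 ^ (-((2 * s.re - max (-w.re) 0) / 2)) *
          Statement2Aux.npr pq.2.1 ^ (-((2 * s'.re - max (-w.re) 0) / 2)) :=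
      S1.mul_of_nonneg S2 (fun p => Real.rpow_nonneg
          (by have := Statement2Aux.one_le_npr p.1 p.2.1; linarith) _)
        (fun q => Real.rpow_nonneg
          (by have := Statement2Aux.one_le_npr q.1 q.2.1; linarith) _)
    exact Summable.of_nonneg_of_le (fun pq => norm_nonneg _)
      (Statement2Aux.key_bound z w s s' hz (by linarith) (by linarith))
      (Sprod.mul_left _)
  · intro K hK hKc
    rcases Set.eq_empty_or_nonempty K with rfl | hne
    · exact tendstoUniformlyOn_empty
    · -- continuous exponent functions
      set e1f : ℂ × ℂ × ℂ × ℂ → ℝ :=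
        fun x => 2 * x.2.2.1.re - max (-x.2.1.re) 0 with he1f
      set e2f : ℂ × ℂ × ℂ × ℂ → ℝ :=
        fun x => 2 * x.2.2.2.re - max (-x.2.1.re) 0 with he2f
      have hre_s : Continuous fun x : ℂ × ℂ × ℂ × ℂ => x.2.2.1.re :=
        Complex.continuous_re.comp (continuous_fst.comp (continuous_snd.comp continuous_snd))
      have hre_s' : Continuous fun x : ℂ × ℂ × ℂ × ℂ => x.2.2.2.re :=
        Complex.continuous_re.comp (continuous_snd.comp (continuous_snd.comp continuous_snd))
      have hre_w : Continuous fun x : ℂ × ℂ × ℂ × ℂ => x.2.1.re :=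
        Complex.continuous_re.comp (continuous_fst.comp continuous_snd)
      have hre_z : Continuous fun x : ℂ × ℂ × ℂ × ℂ => x.1.re :=
        Complex.continuous_re.comp continuous_fst
      have him_z : Continuous fun x : ℂ × ℂ × ℂ × ℂ => x.1.im :=
        Complex.continuous_im.comp continuous_fst
      have hmax : Continuous fun x : ℂ × ℂ × ℂ × ℂ => max (-x.2.1.re) 0 :=
        (hre_w.neg).max continuous_const
      have hce1 : Continuous e1f := ((continuous_const.mul hre_s).sub hmax)
      have hce2 : Continuous e2f := ((continuous_const.mul hre_s').sub hmax)
      have hφ : Continuous fun x => min (e1f x) (e2f x) := hce1.min hce2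
      obtain ⟨x0, hx0K, hx0min⟩ := hKc.exists_isMinOn hne hφ.continuousOn
      set m : ℝ := min (e1f x0) (e2f x0) with hm_def
      have hx0mem := hK hx0K
      obtain ⟨hz0, hs0, hs0', hw0, hw0'⟩ := hx0mem
      have hm : 2 < m :=
        lt_min (Statement2Aux.exp_gt _ _ hs0 hw0) (Statement2Aux.exp_gt _ _ hs0' hw0')
      have hmle : ∀ y ∈ K, m ≤ e1f y ∧ m ≤ e2f y := fun y hy =>
        ⟨le_trans (hx0min hy) (min_le_left _ _), le_trans (hx0min hy) (min_le_right _ _)⟩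
      clear_value e1f e2f m
      -- continuous constant function
      set ψ : ℂ × ℂ × ℂ × ℂ → ℝ := fun x =>
        x.1.im ^ (x.2.2.1.re + x.2.2.2.re - max (-x.2.1.re) 0) *
          Statement2Aux.Mzz x.1 ^ ((e1f x + e2f x) / 2) with hψdef
      have hψcont : ContinuousOn ψ K := by
        have him_ne : ∀ x ∈ K, x.1.im ≠ 0 := fun x hx => ne_of_gt (hK hx).1
        have hMcont : ContinuousOn (fun x : ℂ × ℂ × ℂ × ℂ => Statement2Aux.Mzz x.1) K := by
          have hdiv : ContinuousOn
              (fun x : ℂ × ℂ × ℂ × ℂ => (1 + 2 * x.1.re ^ 2) / x.1.im ^ 2) K :=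
            ContinuousOn.div
              ((continuous_const.add (continuous_const.mul (hre_z.pow 2))).continuousOn)
              ((him_z.pow 2).continuousOn)
              (fun x hx => by simpa using pow_ne_zero 2 (him_ne x hx))
          exact hdiv.sup continuousOn_const
        apply ContinuousOn.mul
        · apply ContinuousOn.rpow him_z.continuousOn
            (((hre_s.add hre_s').sub hmax)).continuousOn
          exact fun x hx => Or.inl (him_ne x hx)
        · apply ContinuousOn.rpow hMcont (((hce1.add hce2).div_const 2)).continuousOn
          intro x hx
          left
          have := Statement2Aux.two_le_Mzz x.1
          intro h; rw [h] at this; linarith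
      obtain ⟨x1, hx1K, hx1max⟩ := hKc.exists_isMaxOn hne hψcont
      set C : ℝ := ψ x1 with hC_def
      have hCbound : ∀ y ∈ K, ψ y ≤ C := fun y hy => hx1max hy
      clear_value C
      have hu : Summable fun pq : CP1 × CP1 =>
          C * (Statement2Aux.npr pq.1.1 ^ (-(m / 2)) *
            Statement2Aux.npr pq.2.1 ^ (-(m / 2))) := by
        refine Summable.mul_left C ?_
        exact (Statement2Aux.summable_npr m hm).mul_of_nonneg
          (Statement2Aux.summable_npr m hm)
          (fun p => Real.rpow_nonneg
            (by have := Statement2Aux.one_le_npr p.1 p.2.1; linarith) _)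
          (fun q => Real.rpow_nonneg
            (by have := Statement2Aux.one_le_npr q.1 q.2.1; linarith) _)
      have hbound : ∀ (pq : CP1 × CP1), ∀ x ∈ K,
          ‖nhTerm x.2.1 x.2.2.1 x.2.2.2 x.1 pq‖ ≤
            C * (Statement2Aux.npr pq.1.1 ^ (-(m / 2)) *
              Statement2Aux.npr pq.2.1 ^ (-(m / 2))) := by
        intro pq x hx
        obtain ⟨hz, hs, hs', hw, hw'⟩ := hK hx
        have h1 := Statement2Aux.exp_gt _ _ hs hw
        have h2 := Statement2Aux.exp_gt _ _ hs' hw'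
        have hme1 : m ≤ e1f x := (hmle x hx).1
        have hme2 : m ≤ e2f x := (hmle x hx).2
        have hnp1 : 1 ≤ Statement2Aux.npr pq.1.1 := Statement2Aux.one_le_npr _ pq.1.2.1
        have hnq1 : 1 ≤ Statement2Aux.npr pq.2.1 := Statement2Aux.one_le_npr _ pq.2.2.1
        have hkey := Statement2Aux.key_bound x.1 x.2.1 x.2.2.1 x.2.2.2 hz
          (by linarith) (by linarith) pq
        refine le_trans hkey ?_
        have hψx : ψ x ≤ C := hCbound x hx
        have hψx0 : 0 ≤ ψ x := by
          apply mul_nonneg (Real.rpow_nonneg hz.le _)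
          refine Real.rpow_nonneg ?_ _
          have := Statement2Aux.two_le_Mzz x.1; linarith
        have hA : Statement2Aux.npr pq.1.1 ^ (-(e1f x / 2)) ≤
            Statement2Aux.npr pq.1.1 ^ (-(m / 2)) :=
          Real.rpow_le_rpow_of_exponent_le hnp1 (by linarith)
        have hB : Statement2Aux.npr pq.2.1 ^ (-(e2f x / 2)) ≤
            Statement2Aux.npr pq.2.1 ^ (-(m / 2)) :=
          Real.rpow_le_rpow_of_exponent_le hnq1 (by linarith)
        have hprod : Statement2Aux.npr pq.1.1 ^ (-(e1f x / 2)) *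
            Statement2Aux.npr pq.2.1 ^ (-(e2f x / 2)) ≤
            Statement2Aux.npr pq.1.1 ^ (-(m / 2)) *
              Statement2Aux.npr pq.2.1 ^ (-(m / 2)) :=
          mul_le_mul hA hB (Real.rpow_nonneg (by linarith) _)
            (Real.rpow_nonneg (by linarith) _)
        have goal_eq : x.1.im ^ (x.2.2.1.re + x.2.2.2.re - max (-x.2.1.re) 0) *
            Statement2Aux.Mzz x.1 ^
              ((2 * x.2.2.1.re - max (-x.2.1.re) 0 +
                (2 * x.2.2.2.re - max (-x.2.1.re) 0)) / 2) *
            (Statement2Aux.npr pq.1.1 ^ (-((2 * x.2.2.1.re - max (-x.2.1.re) 0) / 2)) *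
              Statement2Aux.npr pq.2.1 ^ (-((2 * x.2.2.2.re - max (-x.2.1.re) 0) / 2)))
            = ψ x * (Statement2Aux.npr pq.1.1 ^ (-(e1f x / 2)) *
                Statement2Aux.npr pq.2.1 ^ (-(e2f x / 2))) := by
          simp only [hψdef, he1f, he2f]
        rw [goal_eq]
        calc ψ x * (Statement2Aux.npr pq.1.1 ^ (-(e1f x / 2)) *
              Statement2Aux.npr pq.2.1 ^ (-(e2f x / 2)))
            ≤ ψ x * (Statement2Aux.npr pq.1.1 ^ (-(m / 2)) *
              Statement2Aux.npr pq.2.1 ^ (-(m / 2))) :=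
              mul_le_mul_of_nonneg_left hprod hψx0
          _ ≤ C * (Statement2Aux.npr pq.1.1 ^ (-(m / 2)) *
              Statement2Aux.npr pq.2.1 ^ (-(m / 2))) := by
              apply mul_le_mul_of_nonneg_right hψx
              exact mul_nonneg (Real.rpow_nonneg (by
                have := Statement2Aux.one_le_npr pq.1.1 pq.1.2.1; linarith) _)
                (Real.rpow_nonneg (by
                  have := Statement2Aux.one_le_npr pq.2.1 pq.2.2.1; linarith) _)
      exact tendstoUniformlyOn_tsum hu hbound
end
end

section
/- Let k ∈ 2ℤ and let s, w ∈ ℂ satisfy 2 < Re(s) < k−2, Re(w) < Re(s)−1 and Re(w) < k−1−Re(s). Then ζ(1−w+s)·ζ(1−w+k−s)·E_{s,k−s}(z,w) = Σ_{a,b,c,d ∈ ℤ, ad−bc > 0} (ad−bc)^{w−1} · ((az+b)/(cz+d))^{−s} · (cz+d)^{−k}, where the right-hand side converges absolutely; here (az+b)/(cz+d) ∈ ℍ since ad−bc > 0, so the principal-branch power is well defined. -/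
noncomputable section

open Complex Filter MeasureTheory

lemma ofReal_mul_cpow' {x : ℝ} (hx : 0 < x) {ρ : ℂ} (hρ : ρ ≠ 0) (c : ℂ) :
    ((x : ℂ) * ρ) ^ c = (x : ℂ) ^ c * ρ ^ c := by
  have hx' : (x : ℂ) ≠ 0 := Complex.ofReal_ne_zero.mpr hx.ne'
  rw [Complex.cpow_def_of_ne_zero (mul_ne_zero hx' hρ), Complex.log_ofReal_mul hx hρ,
    Complex.ofReal_log hx.le, add_mul, Complex.exp_add,
    ← Complex.cpow_def_of_ne_zero hx', ← Complex.cpow_def_of_ne_zero hρ]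

lemma abs_cpow_le'' {ρ : ℂ} (hρ : ρ ≠ 0) (c : ℂ) :
    ‖ρ ^ c‖ ≤ ‖ρ‖ ^ c.re * Real.exp (Real.pi * |c.im|) := by
  rw [Complex.norm_cpow_of_ne_zero hρ, div_le_iff₀ (Real.exp_pos _), mul_assoc, ← Real.exp_add]
  have h1 : |ρ.arg * c.im| ≤ Real.pi * |c.im| := by
    rw [abs_mul]
    exact mul_le_mul_of_nonneg_right (Complex.abs_arg_le_pi ρ) (abs_nonneg _)
  have h2 : 0 ≤ Real.pi * |c.im| + ρ.arg * c.im := by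
    have := neg_abs_le (ρ.arg * c.im); linarith
  exact le_mul_of_one_le_right (Real.rpow_nonneg (norm_nonneg _) _) (Real.one_le_exp h2)

lemma inv_cpow_pos_real {x : ℝ} (hx : 0 < x) (c : ℂ) :
    ((x : ℂ)⁻¹) ^ c = ((x : ℂ) ^ c)⁻¹ := by
  rw [Complex.inv_cpow]
  rw [Complex.arg_ofReal_of_nonneg hx.le]
  exact Real.pi_ne_zero.symm



def cpVec (p : CP) : Fin 2 → ℤ := ![p.1.1, p.1.2]

lemma cpVec_injective : Function.Injective cpVec := by
  intro p q h
  have h0 := congrFun h 0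
  have h1 := congrFun h 1
  simp [cpVec] at h0 h1
  exact Subtype.ext (Prod.ext h0 h1)

lemma cpVec_ne_zero (p : CP) : cpVec p ≠ 0 := by
  intro h
  have h0 := congrFun h 0
  have h1 := congrFun h 1
  simp [cpVec] at h0 h1
  have := p.2
  rw [h0, h1] at this
  simpa using this.isUnit_of_dvd' dvd_rfl dvd_rfl

lemma abs_int_le_norm_cpVec (p : CP) :
    |(p.1.1 : ℝ)| ≤ ‖cpVec p‖ ∧ |(p.1.2 : ℝ)| ≤ ‖cpVec p‖ := by
  rw [EisensteinSeries.norm_eq_max_natAbs]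
  have e0 : cpVec p 0 = p.1.1 := rfl
  have e1 : cpVec p 1 = p.1.2 := rfl
  rw [e0, e1]
  have a0 : |((p.1.1 : ℤ) : ℝ)| = ((p.1.1.natAbs : ℕ) : ℝ) := by
    rw [Nat.cast_natAbs, Int.cast_abs]
  have a1 : |((p.1.2 : ℤ) : ℝ)| = ((p.1.2.natAbs : ℕ) : ℝ) := by
    rw [Nat.cast_natAbs, Int.cast_abs]
  rw [a0, a1]
  exact ⟨by exact_mod_cast le_max_left _ _, by exact_mod_cast le_max_right _ _⟩

lemma summable_cpVec_rpow {ρ : ℝ} (hρ : 2 < ρ) :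
    Summable fun p : CP => ‖cpVec p‖ ^ (-ρ) :=
  (EisensteinSeries.summable_one_div_norm_rpow hρ).comp_injective cpVec_injective

lemma jP_lower (z : UpperHalfPlane) (p : CP) :
    EisensteinSeries.r z * ‖cpVec p‖ ≤ ‖jP p.1 (z : ℂ)‖ := by
  have := EisensteinSeries.r_mul_max_le z (cpVec_ne_zero p)
  simpa [cpVec, jP] using this

lemma jP_pos (z : UpperHalfPlane) (p : CP) : 0 < ‖jP p.1 (z : ℂ)‖ :=
  lt_of_lt_of_le (mul_pos (EisensteinSeries.r_pos z)
    (norm_pos_iff.mpr (cpVec_ne_zero p))) (jP_lower z p)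

lemma jP_upper (z : UpperHalfPlane) (p : CP) :
    ‖jP p.1 (z : ℂ)‖ ≤ (‖(z : ℂ)‖ + 1) * ‖cpVec p‖ := by
  obtain ⟨h1, h2⟩ := abs_int_le_norm_cpVec p
  have t1 : ‖jP p.1 (z : ℂ)‖ ≤
      |(p.1.1 : ℝ)| * ‖(z : ℂ)‖ + |(p.1.2 : ℝ)| := by
    refine (norm_add_le _ _).trans ?_
    simp [norm_mul, abs_mul]
  have hz : 0 ≤ ‖(z : ℂ)‖ := norm_nonneg _
  nlinarith [abs_nonneg ((p.1.1 : ℝ)), abs_nonneg ((p.1.2 : ℝ))]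


lemma summable_dblEisTerm_norm (k : ℤ) (s w : ℂ) (Z : UpperHalfPlane)
    (hs1 : 2 < s.re) (hs2 : s.re < (k : ℝ) - 2)
    (hw1 : w.re < s.re - 1) (hw2 : w.re < (k : ℝ) - 1 - s.re) :
    Summable fun pq : CP × CP => ‖dblEisTerm k s w (Z : ℂ) pq‖ := by
  set z : ℂ := (Z : ℂ) with hzdef
  set σ : ℝ := s.re with hσ
  set t : ℝ := max (w.re - 1) 0 with htdef
  have ht0 : 0 ≤ t := le_max_right _ _
  have ht1 : w.re - 1 ≤ t := le_max_left _ _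
  have hρ₁ : 2 < σ - t := by
    rcases max_choice (w.re - 1) 0 with h | h <;> rw [htdef, h] <;> linarith
  have hρ₂ : 2 < (k : ℝ) - σ - t := by
    rcases max_choice (w.re - 1) 0 with h | h <;> rw [htdef, h] <;> linarith
  have hk4 : (4 : ℝ) < (k : ℝ) := by linarith
  have hr : 0 < EisensteinSeries.r Z := EisensteinSeries.r_pos Z
  set R : ℝ := EisensteinSeries.r Z with hRdef
  set M : ℝ := ‖z‖ + 1 with hMdef
  have hM : 0 < M := by positivity
  set E : ℝ := Real.exp (Real.pi * |s.im|) with hEdef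
  have hE : 0 < E := Real.exp_pos _
  set C : ℝ := 2 ^ t * (R ^ (-σ) * (M ^ σ * (R ^ (-(k : ℝ)) * E))) with hCdef
  have hC : 0 < C := by
    have := Real.rpow_pos_of_pos hr (-σ)
    have := Real.rpow_pos_of_pos hr (-(k : ℝ))
    have := Real.rpow_pos_of_pos hM σ
    have h2 : (0:ℝ) < 2 ^ t := Real.rpow_pos_of_pos two_pos t
    positivity
  -- the comparison function
  have S1 : Summable fun p : CP => ‖cpVec p‖ ^ (-(σ - t)) := summable_cpVec_rpow hρ₁
  have S2 : Summable fun p : CP => ‖cpVec p‖ ^ (-((k : ℝ) - σ - t)) := summable_cpVec_rpow hρ₂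
  have SG : Summable fun pq : CP × CP =>
      C * (‖cpVec pq.1‖ ^ (-(σ - t)) * ‖cpVec pq.2‖ ^ (-((k : ℝ) - σ - t))) :=
    (S1.mul_of_nonneg S2 (fun p => Real.rpow_nonneg (norm_nonneg _) _)
      (fun p => Real.rpow_nonneg (norm_nonneg _) _)).mul_left C
  refine Summable.of_nonneg_of_le (fun _ => norm_nonneg _) (fun pq => ?_) SG
  obtain ⟨p, q⟩ := pq
  set P : ℝ := ‖cpVec p‖ with hPdef
  set Q : ℝ := ‖cpVec q‖ with hQdef
  have hP : 0 < P := norm_pos_iff.mpr (cpVec_ne_zero p)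
  have hQ : 0 < Q := norm_pos_iff.mpr (cpVec_ne_zero q)
  have hGpos : 0 ≤ C * (P ^ (-(σ - t)) * Q ^ (-((k : ℝ) - σ - t))) := by
    have := Real.rpow_nonneg hP.le (-(σ - t))
    have := Real.rpow_nonneg hQ.le (-((k : ℝ) - σ - t))
    positivity
  by_cases hD : 0 < crossP p.1 q.1
  swap
  · simp only [dblEisTerm, if_neg hD, norm_zero]; exact hGpos
  set D : ℤ := crossP p.1 q.1 with hDdef
  set jp : ℂ := jP p.1 z with hjp
  set jq : ℂ := jP q.1 z with hjq
  set ap : ℝ := ‖jp‖ with hap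
  set aq : ℝ := ‖jq‖ with haq
  have hap0 : 0 < ap := jP_pos Z p
  have haq0 : 0 < aq := jP_pos Z q
  have hrP : R * P ≤ ap := jP_lower Z p
  have hrQ : R * Q ≤ aq := jP_lower Z q
  have hqub : aq ≤ M * Q := jP_upper Z q
  have hD1 : (1 : ℝ) ≤ (D : ℝ) := by exact_mod_cast hD
  have hDub : (D : ℝ) ≤ 2 * (P * Q) := by
    obtain ⟨hp1, hp2⟩ := abs_int_le_norm_cpVec p
    obtain ⟨hq1, hq2⟩ := abs_int_le_norm_cpVec q
    have e1 : (D : ℝ) = (p.1.1 : ℝ) * (q.1.2 : ℝ) - (p.1.2 : ℝ) * (q.1.1 : ℝ) := by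
      rw [hDdef]; unfold crossP; push_cast; ring
    calc (D : ℝ) ≤ |(D : ℝ)| := le_abs_self _
      _ ≤ |(p.1.1 : ℝ) * (q.1.2 : ℝ)| + |(p.1.2 : ℝ) * (q.1.1 : ℝ)| := by
          rw [e1]; exact abs_sub _ _
      _ = |(p.1.1 : ℝ)| * |(q.1.2 : ℝ)| + |(p.1.2 : ℝ)| * |(q.1.1 : ℝ)| := by
          rw [abs_mul, abs_mul]
      _ ≤ P * Q + P * Q :=
          add_le_add (mul_le_mul hp1 hq2 (abs_nonneg _) hP.le)
            (mul_le_mul hp2 hq1 (abs_nonneg _) hP.le)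
      _ = 2 * (P * Q) := by ring
  -- compute the norm
  have hjpne : jp ≠ 0 := norm_pos_iff.mp hap0
  have hjqne : jq ≠ 0 := norm_pos_iff.mp haq0
  have hnorm : ‖dblEisTerm k s w z (p, q)‖ =
      ‖((D : ℤ) : ℂ) ^ (w - 1)‖ * ‖(jp / jq) ^ (-s)‖ *
        ‖jq ^ (-k)‖ := by
    simp only [dblEisTerm]; rw [if_pos hD, norm_mul, norm_mul]
  have hA : ‖((D : ℤ) : ℂ) ^ (w - 1)‖ ≤ 2 ^ t * (P ^ t * Q ^ t) := by
    have hcast : ((D : ℤ) : ℂ) = (((D : ℝ)) : ℂ) := by push_cast; rfl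
    rw [hcast, Complex.norm_cpow_eq_rpow_re_of_pos (by linarith : (0:ℝ) < (D:ℝ))]
    have hre : (w - 1).re = w.re - 1 := by simp
    rw [hre]
    calc (D : ℝ) ^ (w.re - 1) ≤ (D : ℝ) ^ t :=
          Real.rpow_le_rpow_of_exponent_le hD1 ht1
      _ ≤ (2 * (P * Q)) ^ t := Real.rpow_le_rpow (by linarith) hDub ht0
      _ = 2 ^ t * (P ^ t * Q ^ t) := by
          rw [Real.mul_rpow (by norm_num) (by positivity), Real.mul_rpow hP.le hQ.le]
  have hB : ‖(jp / jq) ^ (-s)‖ ≤ (R ^ (-σ) * P ^ (-σ)) * (M ^ σ * Q ^ σ) * E := by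
    have hne : jp / jq ≠ 0 := div_ne_zero hjpne hjqne
    have h1 := abs_cpow_le'' hne (-s)
    have him : Real.pi * |(-s).im| = Real.pi * |s.im| := by simp
    have hre2 : (-s).re = -σ := by simp [hσ]
    rw [him, hre2, norm_div] at h1
    refine h1.trans ?_
    have key : (ap / aq) ^ (-σ) = ap ^ (-σ) * aq ^ σ := by
      rw [Real.div_rpow hap0.le haq0.le, Real.rpow_neg haq0.le, div_eq_mul_inv, inv_inv]
    calc (ap / aq) ^ (-σ) * E = ap ^ (-σ) * aq ^ σ * E := by rw [key]
      _ ≤ (R ^ (-σ) * P ^ (-σ)) * (M ^ σ * Q ^ σ) * E := by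
          have b1 : ap ^ (-σ) ≤ R ^ (-σ) * P ^ (-σ) := by
            calc ap ^ (-σ) ≤ (R * P) ^ (-σ) :=
                  Real.rpow_le_rpow_of_nonpos (by positivity) hrP (by linarith)
              _ = R ^ (-σ) * P ^ (-σ) := Real.mul_rpow hr.le hP.le
          have b2 : aq ^ σ ≤ M ^ σ * Q ^ σ := by
            calc aq ^ σ ≤ (M * Q) ^ σ := Real.rpow_le_rpow haq0.le hqub (by linarith)
              _ = M ^ σ * Q ^ σ := Real.mul_rpow hM.le hQ.le
          have nn : (0:ℝ) ≤ R ^ (-σ) * P ^ (-σ) :=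
            mul_nonneg (Real.rpow_nonneg hr.le _) (Real.rpow_nonneg hP.le _)
          exact mul_le_mul_of_nonneg_right
            (mul_le_mul b1 b2 (Real.rpow_nonneg haq0.le _) nn) hE.le
  have hCc : ‖jq ^ (-k)‖ ≤ R ^ (-(k:ℝ)) * Q ^ (-(k:ℝ)) := by
    have e1 : ‖jq ^ (-k)‖ = aq ^ (-(k:ℝ)) := by
      rw [norm_zpow, ← Real.rpow_intCast aq (-k)]
      norm_num
    rw [e1]
    calc aq ^ (-(k:ℝ)) ≤ (R * Q) ^ (-(k:ℝ)) :=
          Real.rpow_le_rpow_of_nonpos (by positivity) hrQ (by linarith)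
      _ = R ^ (-(k:ℝ)) * Q ^ (-(k:ℝ)) := Real.mul_rpow hr.le hQ.le
  rw [hnorm]
  have nnA : (0:ℝ) ≤ 2 ^ t * (P ^ t * Q ^ t) :=
    mul_nonneg (Real.rpow_nonneg (by norm_num) _)
      (mul_nonneg (Real.rpow_nonneg hP.le _) (Real.rpow_nonneg hQ.le _))
  have nnB : (0:ℝ) ≤ (R ^ (-σ) * P ^ (-σ)) * (M ^ σ * Q ^ σ) * E :=
    mul_nonneg (mul_nonneg
      (mul_nonneg (Real.rpow_nonneg hr.le _) (Real.rpow_nonneg hP.le _))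
      (mul_nonneg (Real.rpow_nonneg hM.le _) (Real.rpow_nonneg hQ.le _))) hE.le
  calc ‖((D : ℤ) : ℂ) ^ (w - 1)‖ * ‖(jp / jq) ^ (-s)‖ *
        ‖jq ^ (-k)‖
      ≤ (2 ^ t * (P ^ t * Q ^ t)) * ((R ^ (-σ) * P ^ (-σ)) * (M ^ σ * Q ^ σ) * E) *
        (R ^ (-(k:ℝ)) * Q ^ (-(k:ℝ))) := by
        exact mul_le_mul (mul_le_mul hA hB (norm_nonneg _) nnA) hCc
          (norm_nonneg _) (mul_nonneg nnA nnB)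
    _ = C * (P ^ (-(σ - t)) * Q ^ (-((k:ℝ) - σ - t))) := by
        rw [hCdef, show -(σ - t) = t + -σ by ring,
          show -((k:ℝ) - σ - t) = t + σ + -(k:ℝ) by ring,
          Real.rpow_add hP, Real.rpow_add hQ, Real.rpow_add hQ]
        ring



def rowOf (x : ℕ+ × CP) : ℤ × ℤ := ((x.1 : ℤ) * x.2.1.1, (x.1 : ℤ) * x.2.1.2)

lemma rowOf_injective : Function.Injective rowOf := by
  rintro ⟨m, p⟩ ⟨n, q⟩ h
  simp only [rowOf, Prod.mk.injEq] at h
  obtain ⟨h1, h2⟩ := h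
  have hg : ((m : ℤ)).natAbs * Int.gcd p.1.1 p.1.2 = ((n : ℤ)).natAbs * Int.gcd q.1.1 q.1.2 := by
    rw [← Int.gcd_mul_left, ← Int.gcd_mul_left, h1, h2]
  rw [Int.isCoprime_iff_gcd_eq_one.mp p.2, Int.isCoprime_iff_gcd_eq_one.mp q.2] at hg
  simp only [mul_one] at hg
  have hmn : m = n := by
    have : (m : ℕ) = (n : ℕ) := by simpa using hg
    exact PNat.coe_injective this
  subst hmn
  have hm0 : (m : ℤ) ≠ 0 := by exact_mod_cast m.ne_zero
  have e1 : p.1.1 = q.1.1 := mul_left_cancel₀ hm0 h1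
  have e2 : p.1.2 = q.1.2 := mul_left_cancel₀ hm0 h2
  simp only [Prod.mk.injEq, true_and]
  exact Subtype.ext (Prod.ext e1 e2)

lemma rowOf_exists {a b : ℤ} (h : ¬(a = 0 ∧ b = 0)) : ∃ x : ℕ+ × CP, rowOf x = (a, b) := by
  have hg : 0 < Int.gcd a b := by
    rcases Int.gcd_pos_iff.mpr (by tauto) with h'
    exact h'
  refine ⟨⟨⟨Int.gcd a b, hg⟩, ⟨(a / (Int.gcd a b : ℤ), b / (Int.gcd a b : ℤ)),
    Int.isCoprime_iff_gcd_eq_one.mpr (Int.gcd_div_gcd_div_gcd hg)⟩⟩, ?_⟩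
  simp only [rowOf, PNat.mk_ofNat]
  refine Prod.ext ?_ ?_
  · exact Int.mul_ediv_cancel' (Int.gcd_dvd_left a b)
  · exact Int.mul_ediv_cancel' (Int.gcd_dvd_right a b)

lemma quadTerm_eq (k : ℤ) (s w : ℂ) (Z : UpperHalfPlane) (m n : ℤ) (hm : 0 < m) (hn : 0 < n)
    (P Q : CP) :
    quadTerm k s w (Z : ℂ) (m * P.1.1, m * P.1.2, n * Q.1.1, n * Q.1.2) =
      (m : ℂ) ^ (w - 1 - s) * (n : ℂ) ^ (w - 1 + s - (k : ℂ)) *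
        dblEisTerm k s w (Z : ℂ) (P, Q) := by
  set z : ℂ := (Z : ℂ) with hz
  set D : ℤ := crossP P.1 Q.1 with hDdef
  have hdet : (m * P.1.1) * (n * Q.1.2) - (m * P.1.2) * (n * Q.1.1) = (m * n) * D := by
    rw [hDdef]; unfold crossP; ring
  have hcond : (0 < (m * P.1.1) * (n * Q.1.2) - (m * P.1.2) * (n * Q.1.1)) ↔ 0 < D := by
    rw [hdet]; exact mul_pos_iff_of_pos_left (mul_pos hm hn)
  simp only [quadTerm, dblEisTerm]
  by_cases hD : 0 < D
  · rw [if_pos (by exact hcond.mpr hD), if_pos (by exact hD)]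
    have hjp : jP P.1 z ≠ 0 := norm_pos_iff.mp (jP_pos Z P)
    have hjq : jP Q.1 z ≠ 0 := norm_pos_iff.mp (jP_pos Z Q)
    have hmR : (0 : ℝ) < (m : ℝ) := by exact_mod_cast hm
    have hnR : (0 : ℝ) < (n : ℝ) := by exact_mod_cast hn
    have hmne : (m : ℂ) ≠ 0 := by exact_mod_cast hm.ne'
    have hnne : (n : ℂ) ≠ 0 := by exact_mod_cast hn.ne'
    have e1 : ((m * P.1.1 : ℤ) : ℂ) * z + ((m * P.1.2 : ℤ) : ℂ) = (m : ℂ) * jP P.1 z := by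
      unfold jP; push_cast; ring
    have e2 : ((n * Q.1.1 : ℤ) : ℂ) * z + ((n * Q.1.2 : ℤ) : ℂ) = (n : ℂ) * jP Q.1 z := by
      unfold jP; push_cast; ring
    rw [e1, e2, show (m * P.1.1) * (n * Q.1.2) - (m * P.1.2) * (n * Q.1.1) = (m * n) * D
      from hdet]
    have hne : jP P.1 z / jP Q.1 z ≠ 0 := div_ne_zero hjp hjq
    -- determinant power
    have c1 : (((m * n * D : ℤ)) : ℂ) ^ (w - 1)
        = (m : ℂ) ^ (w - 1) * ((n : ℂ) ^ (w - 1) * ((D : ℤ) : ℂ) ^ (w - 1)) := by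
      have hcast : (((m * n * D : ℤ)) : ℂ) = ((m : ℝ) : ℂ) * (((n : ℝ) : ℂ) * ((((D : ℤ) : ℝ)) : ℂ)) := by
        push_cast; ring
      have hDR : (0 : ℝ) < ((D : ℤ) : ℝ) := by exact_mod_cast hD
      have hprod : ((n : ℝ) : ℂ) * ((((D : ℤ) : ℝ)) : ℂ) ≠ 0 := by
        apply mul_ne_zero <;> exact Complex.ofReal_ne_zero.mpr (by positivity)
      rw [hcast, ofReal_mul_cpow' hmR hprod, mul_cpow_ofReal_nonneg hnR.le hDR.le]
      push_cast
      ring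
    -- ratio power
    have c2 : ((m : ℂ) * jP P.1 z / ((n : ℂ) * jP Q.1 z)) ^ (-s)
        = (m : ℂ) ^ (-s) * ((n : ℂ) ^ s * (jP P.1 z / jP Q.1 z) ^ (-s)) := by
      have split : (m : ℂ) * jP P.1 z / ((n : ℂ) * jP Q.1 z)
          = ((m : ℝ) : ℂ) * ((((n : ℝ)⁻¹ : ℝ) : ℂ) * (jP P.1 z / jP Q.1 z)) := by
        push_cast
        field_simp
      have hinvne : (((n : ℝ)⁻¹ : ℝ) : ℂ) * (jP P.1 z / jP Q.1 z) ≠ 0 :=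
        mul_ne_zero (Complex.ofReal_ne_zero.mpr (by positivity)) hne
      rw [split, ofReal_mul_cpow' hmR hinvne, ofReal_mul_cpow' (inv_pos.mpr hnR) hne]
      have einv : (((n : ℝ)⁻¹ : ℝ) : ℂ) = ((n : ℝ) : ℂ)⁻¹ := by push_cast; ring
      rw [einv, inv_cpow_pos_real hnR (-s)]
      have hfix : (((n : ℝ) : ℂ) ^ (-s))⁻¹ = ((n : ℝ) : ℂ) ^ s := by
        rw [Complex.cpow_neg, inv_inv]
      rw [hfix]
      push_cast
      ring
    -- j power
    have c3 : ((n : ℂ) * jP Q.1 z) ^ (-k) = (n : ℂ) ^ (-k) * (jP Q.1 z) ^ (-k) :=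
      mul_zpow _ _ _
    rw [c1, c2, c3]
    -- expand the combined exponents on the RHS
    have em : (m : ℂ) ^ (w - 1 - s) = (m : ℂ) ^ (w - 1) * (m : ℂ) ^ (-s) := by
      rw [show w - 1 - s = (w - 1) + (-s) by ring, Complex.cpow_add _ _ hmne]
    have en : (n : ℂ) ^ (w - 1 + s - (k : ℂ))
        = (n : ℂ) ^ (w - 1) * (n : ℂ) ^ s * (n : ℂ) ^ (-k) := by
      rw [show w - 1 + s - (k : ℂ) = ((w - 1) + s) + ((-k : ℤ) : ℂ) by push_cast; ring,
        Complex.cpow_add _ _ hnne, Complex.cpow_add _ _ hnne, Complex.cpow_intCast]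
    rw [em, en]
    ring
  · rw [if_neg (by exact fun hc => hD (hcond.mp hc)), if_neg (by exact hD)]
    ring

lemma hasSum_zeta_pnat {c : ℂ} (hc : 1 < c.re) :
    HasSum (fun m : ℕ+ => ((m : ℕ) : ℂ) ^ (-c)) (riemannZeta c) := by
  have hcne : -c ≠ 0 := by
    simp only [ne_eq, neg_eq_zero]
    rintro rfl
    rw [Complex.zero_re] at hc
    linarith
  have hsum : Summable fun n : ℕ => 1 / (n : ℂ) ^ c := Complex.summable_one_div_nat_cpow.mpr hc
  have hz : HasSum (fun n : ℕ => (n : ℂ) ^ (-c)) (riemannZeta c) := by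
    have h1 := hsum.hasSum
    rw [← zeta_eq_tsum_one_div_nat_cpow hc] at h1
    have he : (fun n : ℕ => 1 / (n : ℂ) ^ c) = fun n : ℕ => (n : ℂ) ^ (-c) := by
      funext n; rw [Complex.cpow_neg, one_div]
    rwa [he] at h1
  have hinj : Function.Injective (fun m : ℕ+ => (m : ℕ)) := fun a b h => PNat.coe_injective h
  have h0 : ∀ n : ℕ, n ∉ Set.range (fun m : ℕ+ => (m : ℕ)) → (n : ℂ) ^ (-c) = 0 := by
    intro n hn
    have hn0 : n = 0 := by
      by_contra h
      exact hn ⟨⟨n, Nat.pos_of_ne_zero h⟩, rfl⟩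
    rw [hn0]
    simp [Complex.zero_cpow hcne]
  exact (Function.Injective.hasSum_iff hinj h0).mpr hz

def Phi (x : (ℕ+ × CP) × (ℕ+ × CP)) : ℤ × ℤ × ℤ × ℤ :=
  ((rowOf x.1).1, (rowOf x.1).2, (rowOf x.2).1, (rowOf x.2).2)

lemma Phi_injective : Function.Injective Phi := by
  rintro ⟨a, b⟩ ⟨c, d⟩ h
  simp only [Phi, Prod.mk.injEq] at h
  obtain ⟨h1, h2, h3, h4⟩ := h
  have e1 : rowOf a = rowOf c := Prod.ext h1 h2
  have e2 : rowOf b = rowOf d := Prod.ext h3 h4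
  exact Prod.ext (rowOf_injective e1) (rowOf_injective e2)

lemma quadTerm_vanish (k : ℤ) (s w z : ℂ) :
    ∀ v : ℤ × ℤ × ℤ × ℤ, v ∉ Set.range Phi → quadTerm k s w z v = 0 := by
  rintro ⟨a, b, c, d⟩ hv
  by_contra hne
  have hD : 0 < a * d - b * c := by
    by_contra hD
    exact hne (by simp only [quadTerm]; exact if_neg hD)
  have hab : ¬(a = 0 ∧ b = 0) := by rintro ⟨rfl, rfl⟩; simp at hD
  have hcd : ¬(c = 0 ∧ d = 0) := by rintro ⟨rfl, rfl⟩; simp at hD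
  obtain ⟨x1, hx1⟩ := rowOf_exists hab
  obtain ⟨x2, hx2⟩ := rowOf_exists hcd
  exact hv ⟨(x1, x2), by simp [Phi, hx1, hx2]⟩


/-- the quadruple-sum expression
`ζ(1-w+s) ζ(1-w+k-s) E_{s,k-s}(z,w) = Σ_{ad-bc>0} (ad-bc)^{w-1} ((az+b)/(cz+d))^{-s} (cz+d)^{-k}`,
the right-hand side converging absolutely. -/
theorem statement3 (k : ℤ) (hke : Even k) (s w z : ℂ) (hz : 0 < z.im)
    (hs1 : 2 < s.re) (hs2 : s.re < (k : ℝ) - 2)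
    (hw1 : w.re < s.re - 1) (hw2 : w.re < (k : ℝ) - 1 - s.re) :
    (Summable fun v : ℤ × ℤ × ℤ × ℤ => ‖quadTerm k s w z v‖) ∧
    HasSum (quadTerm k s w z)
      (riemannZeta (1 - w + s) * riemannZeta (1 - w + (k : ℂ) - s) * dblEis k s w z) := by
  set Z : UpperHalfPlane := ⟨z, hz⟩ with hZdef
  have hzZ : (Z : ℂ) = z := rfl
  have hT : Summable fun pq : CP × CP => ‖dblEisTerm k s w z pq‖ := by
    have := summable_dblEisTerm_norm k s w Z hs1 hs2 hw1 hw2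
    rwa [hzZ] at this
  have hc1 : 1 < (1 - w + s).re := by
    simp only [Complex.add_re, Complex.sub_re, Complex.one_re]
    linarith
  have hc2 : 1 < (1 - w + (k : ℂ) - s).re := by
    simp only [Complex.add_re, Complex.sub_re, Complex.one_re, Complex.intCast_re]
    linarith
  have hg : HasSum (fun m : ℕ+ => ((m : ℕ) : ℂ) ^ (w - 1 - s)) (riemannZeta (1 - w + s)) := by
    have h1 := hasSum_zeta_pnat hc1
    have he : (fun m : ℕ+ => ((m : ℕ) : ℂ) ^ (-(1 - w + s)))
        = fun m : ℕ+ => ((m : ℕ) : ℂ) ^ (w - 1 - s) := by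
      funext m; congr 1; ring
    rwa [he] at h1
  have hh : HasSum (fun m : ℕ+ => ((m : ℕ) : ℂ) ^ (w - 1 + s - (k : ℂ)))
      (riemannZeta (1 - w + (k : ℂ) - s)) := by
    have h1 := hasSum_zeta_pnat hc2
    have he : (fun m : ℕ+ => ((m : ℕ) : ℂ) ^ (-(1 - w + (k : ℂ) - s)))
        = fun m : ℕ+ => ((m : ℕ) : ℂ) ^ (w - 1 + s - (k : ℂ)) := by
      funext m; congr 1; ring
    rwa [he] at h1
  have hgn : Summable fun m : ℕ+ => ‖((m : ℕ) : ℂ) ^ (w - 1 - s)‖ := by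
    have hbase : Summable fun n : ℕ => (n : ℝ) ^ (w.re - 1 - s.re) :=
      Real.summable_nat_rpow.mpr (by linarith)
    have hcomp := hbase.comp_injective
      (fun (a b : ℕ+) hab => PNat.coe_injective hab : Function.Injective fun m : ℕ+ => (m : ℕ))
    refine hcomp.congr fun m => ?_
    simp only [Function.comp_apply]
    have h1 : (((m : ℕ)) : ℂ) = ((((m : ℕ) : ℝ)) : ℂ) := by push_cast; rfl
    rw [h1,
      Complex.norm_cpow_eq_rpow_re_of_pos (by exact_mod_cast m.property) _]
    congr 1
  have hhn : Summable fun m : ℕ+ => ‖((m : ℕ) : ℂ) ^ (w - 1 + s - (k : ℂ))‖ := by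
    have hbase : Summable fun n : ℕ => (n : ℝ) ^ (w.re - 1 + s.re - (k : ℝ)) :=
      Real.summable_nat_rpow.mpr (by linarith)
    have hcomp := hbase.comp_injective
      (fun (a b : ℕ+) hab => PNat.coe_injective hab : Function.Injective fun m : ℕ+ => (m : ℕ))
    refine hcomp.congr fun m => ?_
    simp only [Function.comp_apply]
    have h1 : (((m : ℕ)) : ℂ) = ((((m : ℕ) : ℝ)) : ℂ) := by push_cast; rfl
    rw [h1,
      Complex.norm_cpow_eq_rpow_re_of_pos (by exact_mod_cast m.property) _]
    congr 1
  have hTs : HasSum (dblEisTerm k s w z) (dblEis k s w z) := hT.of_norm.hasSum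
  have hghn : Summable fun mn : ℕ+ × ℕ+ =>
      ‖((mn.1 : ℕ) : ℂ) ^ (w - 1 - s) * ((mn.2 : ℕ) : ℂ) ^ (w - 1 + s - (k : ℂ))‖ := by
    have := hgn.mul_of_nonneg hhn (fun _ => norm_nonneg _) (fun _ => norm_nonneg _)
    exact this.congr fun mn => (norm_mul _ _).symm
  have hgh : HasSum (fun mn : ℕ+ × ℕ+ =>
      ((mn.1 : ℕ) : ℂ) ^ (w - 1 - s) * ((mn.2 : ℕ) : ℂ) ^ (w - 1 + s - (k : ℂ)))
      (riemannZeta (1 - w + s) * riemannZeta (1 - w + (k : ℂ) - s)) := by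
    have hsum := summable_mul_of_summable_norm hgn hhn
    have heq := tsum_mul_tsum_of_summable_norm hgn hhn
    rw [hg.tsum_eq, hh.tsum_eq] at heq
    have h2 := hsum.hasSum
    rwa [← heq] at h2
  have hFn' : Summable fun y : (ℕ+ × ℕ+) × (CP × CP) =>
      ‖((y.1.1 : ℕ) : ℂ) ^ (w - 1 - s) * ((y.1.2 : ℕ) : ℂ) ^ (w - 1 + s - (k : ℂ)) *
        dblEisTerm k s w z y.2‖ := by
    have := hghn.mul_of_nonneg hT (fun _ => norm_nonneg _) (fun _ => norm_nonneg _)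
    exact this.congr fun y => (norm_mul _ _).symm
  have hF' : HasSum (fun y : (ℕ+ × ℕ+) × (CP × CP) =>
      ((y.1.1 : ℕ) : ℂ) ^ (w - 1 - s) * ((y.1.2 : ℕ) : ℂ) ^ (w - 1 + s - (k : ℂ)) *
        dblEisTerm k s w z y.2)
      (riemannZeta (1 - w + s) * riemannZeta (1 - w + (k : ℂ) - s) * dblEis k s w z) := by
    have hsum := summable_mul_of_summable_norm hghn hT
    have heq := tsum_mul_tsum_of_summable_norm hghn hT
    rw [hgh.tsum_eq, hTs.tsum_eq] at heq
    have h2 := hsum.hasSum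
    rwa [← heq] at h2
  set e := Equiv.prodProdProdComm ℕ+ ℕ+ CP CP with hedef
  set F : (ℕ+ × CP) × (ℕ+ × CP) → ℂ := fun x =>
    ((x.1.1 : ℕ) : ℂ) ^ (w - 1 - s) * ((x.2.1 : ℕ) : ℂ) ^ (w - 1 + s - (k : ℂ)) *
      dblEisTerm k s w z (x.1.2, x.2.2) with hFdef
  have hcomp : (fun y : (ℕ+ × ℕ+) × (CP × CP) =>
      ((y.1.1 : ℕ) : ℂ) ^ (w - 1 - s) * ((y.1.2 : ℕ) : ℂ) ^ (w - 1 + s - (k : ℂ)) *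
        dblEisTerm k s w z y.2) = F ∘ e := by
    funext y
    obtain ⟨⟨m, n⟩, ⟨p, q⟩⟩ := y
    rfl
  rw [hcomp] at hF'
  have hF : HasSum F
      (riemannZeta (1 - w + s) * riemannZeta (1 - w + (k : ℂ) - s) * dblEis k s w z) :=
    e.hasSum_iff.mp hF'
  have hcompn : (fun y : (ℕ+ × ℕ+) × (CP × CP) =>
      ‖((y.1.1 : ℕ) : ℂ) ^ (w - 1 - s) * ((y.1.2 : ℕ) : ℂ) ^ (w - 1 + s - (k : ℂ)) *
        dblEisTerm k s w z y.2‖) = (fun x => ‖F x‖) ∘ e := by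
    funext y
    obtain ⟨⟨m, n⟩, ⟨p, q⟩⟩ := y
    rfl
  rw [hcompn] at hFn'
  have hFn : Summable fun x => ‖F x‖ := e.summable_iff.mp hFn'
  have key : ∀ x : (ℕ+ × CP) × (ℕ+ × CP), quadTerm k s w z (Phi x) = F x := by
    rintro ⟨⟨m, p⟩, ⟨n, q⟩⟩
    have h1 := quadTerm_eq k s w Z (m : ℤ) (n : ℤ)
      (by exact_mod_cast m.property) (by exact_mod_cast n.property) p q
    rw [hzZ] at h1
    have e1 : Phi ((m, p), (n, q))
        = ((m : ℤ) * p.1.1, (m : ℤ) * p.1.2, (n : ℤ) * q.1.1, (n : ℤ) * q.1.2) := rfl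
    rw [e1, h1, hFdef]
    have hcm : (((m : ℤ)) : ℂ) = ((m : ℕ) : ℂ) := by push_cast; rfl
    have hcn : (((n : ℤ)) : ℂ) = ((n : ℕ) : ℂ) := by push_cast; rfl
    rw [hcm, hcn]
  constructor
  · refine (Function.Injective.summable_iff Phi_injective ?_).mp ?_
    · intro v hv
      rw [quadTerm_vanish k s w z v hv, norm_zero]
    · exact hFn.congr fun x => by rw [Function.comp_apply, key x]
  · refine (Function.Injective.hasSum_iff Phi_injective (quadTerm_vanish k s w z)).mp ?_
    have : (quadTerm k s w z) ∘ Phi = F := funext key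
    rw [this]
    exact hF
end
end

section
/- Let k ∈ 2ℤ and let s, w ∈ ℂ satisfy 2 < Re(s) < k−2 and Re(w) < min(Re(s)−1, k−1−Re(s)). Then E_{s,k−s}(z,w) = e^{−iπs} · E_{k−s,s}(z,w) for all z ∈ ℍ; equivalently, for the completed series, E*_{k−s,s}(z,w) = (−1)^{k/2} · E*_{s,k−s}(z,w). -/
noncomputable section

open Complex Filter MeasureTheory

lemma myLogNegInv (u : ℂ) (hu : 0 < u.im) :
    Complex.log (-u⁻¹) = Real.pi * I - Complex.log u := by
  have hu0 : u ≠ 0 := fun h => by simp [h] at hu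
  have harg : arg u ≠ Real.pi := by
    intro h
    have := (Complex.arg_eq_pi_iff.mp h).2
    linarith
  have hinv_im : (u⁻¹).im < 0 := by
    rw [Complex.inv_im]
    exact div_neg_of_neg_of_pos (by linarith) (Complex.normSq_pos.mpr hu0)
  have hargeq : arg (-u⁻¹) = -arg u + Real.pi := by
    rw [Complex.arg_neg_eq_arg_add_pi_of_im_neg hinv_im, Complex.arg_inv, if_neg harg]
  apply Complex.ext
  · rw [Complex.log_re, Complex.sub_re, Complex.log_re]
    simp [Real.log_inv]
  · rw [Complex.log_im, Complex.sub_im, Complex.log_im, hargeq]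
    simp
    ring

lemma myCpowNegInv (u s : ℂ) (hu : 0 < u.im) :
    u ^ (-s) = Complex.exp (-(Real.pi : ℂ) * I * s) * (-u⁻¹) ^ s := by
  have hu0 : u ≠ 0 := fun h => by simp [h] at hu
  have hv0 : (-u⁻¹) ≠ 0 := by simpa using hu0
  rw [Complex.cpow_def_of_ne_zero hu0, Complex.cpow_def_of_ne_zero hv0, myLogNegInv u hu,
    ← Complex.exp_add]
  congr 1
  ring

/-- Negation of a coprime pair. -/
def negCP (p : CP) : CP := ⟨(-p.1.1, -p.1.2), p.2.neg_left.neg_right⟩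

/-- The bijection `(γ,δ) ↦ (δ, -γ)` on pairs of cosets. -/
def flipE : CP × CP ≃ CP × CP where
  toFun pq := (pq.2, negCP pq.1)
  invFun pq := (negCP pq.2, pq.1)
  left_inv pq := by
    refine Prod.ext (Subtype.ext ?_) rfl
    simp [negCP]
  right_inv pq := by
    refine Prod.ext rfl (Subtype.ext ?_)
    simp [negCP]

lemma myJPne (p : ℤ × ℤ) (hp : IsCoprime p.1 p.2) (z : ℂ) (hz : 0 < z.im) : jP p z ≠ 0 := by
  intro h
  have him : (jP p z).im = 0 := by rw [h]; rfl
  have hre : (jP p z).re = 0 := by rw [h]; rfl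
  simp only [jP, Complex.add_im, Complex.mul_im, Complex.add_re, Complex.mul_re] at him hre
  simp only [Complex.intCast_re, Complex.intCast_im] at him hre
  have hc : (p.1 : ℝ) = 0 := by
    rcases mul_eq_zero.mp (by linarith : (p.1 : ℝ) * z.im = 0) with h1 | h1
    · exact h1
    · exact absurd h1 (ne_of_gt hz)
  have hd : (p.2 : ℝ) = 0 := by
    rw [hc] at hre; linarith [hre]
  have h1 : p.1 = 0 := by exact_mod_cast hc
  have h2 : p.2 = 0 := by exact_mod_cast hd
  rw [h1, h2] at hp
  exact (not_isCoprime_zero_zero hp).elim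

lemma myImRatio (p q : ℤ × ℤ) (z : ℂ) (hq : jP q z ≠ 0) :
    (jP p z / jP q z).im = (crossP p q : ℝ) * z.im / Complex.normSq (jP q z) := by
  rw [Complex.div_im]
  simp only [jP, crossP, Complex.add_im, Complex.mul_im, Complex.add_re, Complex.mul_re,
    Complex.intCast_re, Complex.intCast_im]
  push_cast
  ring

lemma myTermRel (k : ℤ) (hke : Even k) (s w : ℂ) (z : ℂ) (hz : 0 < z.im) (pq : CP × CP) :
    dblEisTerm k s w z pq =
      Complex.exp (-(Real.pi : ℂ) * I * s) * dblEisTerm k ((k : ℂ) - s) w z (flipE pq) := by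
  obtain ⟨p, q⟩ := pq
  have hcross : crossP q.1 (negCP p).1 = crossP p.1 q.1 := by
    simp only [crossP, negCP]; ring
  simp only [dblEisTerm, flipE, Equiv.coe_fn_mk, hcross]
  by_cases hc : 0 < crossP p.1 q.1
  · rw [if_pos hc, if_pos hc]
    have ha : jP p.1 z ≠ 0 := myJPne p.1 p.2 z hz
    have hb : jP q.1 z ≠ 0 := myJPne q.1 q.2 z hz
    set a := jP p.1 z with hadef
    set b := jP q.1 z with hbdef
    have hu : 0 < (a / b).im := by
      rw [myImRatio p.1 q.1 z hb]
      apply div_pos (mul_pos (by exact_mod_cast hc) hz) (Complex.normSq_pos.mpr hb)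
    set u := a / b with hudef
    have hu0 : u ≠ 0 := fun h => by simp [h] at hu
    have hjneg : jP (negCP p).1 z = -a := by
      simp only [jP, negCP, hadef]
      push_cast
      ring
    rw [hjneg]
    have hbu : jP q.1 z / -a = -u⁻¹ := by
      rw [hudef, inv_div, div_neg]
    rw [hbu]
    have hv0 : (-u⁻¹) ≠ 0 := by simpa using hu0
    have hsplit : (-u⁻¹ : ℂ) ^ (-((k : ℂ) - s)) = (-u⁻¹) ^ s * (u : ℂ) ^ (k : ℤ) := by
      have h1 : -((k : ℂ) - s) = s + ((-k : ℤ) : ℂ) := by push_cast; ring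
      rw [h1, Complex.cpow_add _ _ hv0, Complex.cpow_intCast]
      congr 1
      rw [(hke.neg : Even (-k)).neg_zpow]
      rw [inv_zpow, zpow_neg, inv_inv]
    rw [hsplit]
    have hnegk : (-a : ℂ) ^ (-k) = a ^ (-k) := (hke.neg : Even (-k)).neg_zpow a
    rw [hnegk]
    have hab : u ^ (k : ℤ) * a ^ (-k) = b ^ (-k) := by
      have : a = u * b := by rw [hudef]; field_simp
      rw [this, mul_zpow, ← mul_assoc, ← zpow_add₀ hu0]
      simp
    have hcp : u ^ (-s) = Complex.exp (-(Real.pi : ℂ) * I * s) * (-u⁻¹) ^ s :=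
      myCpowNegInv u s hu
    calc ((crossP p.1 q.1 : ℤ) : ℂ) ^ (w - 1) * u ^ (-s) * b ^ (-k)
        = ((crossP p.1 q.1 : ℤ) : ℂ) ^ (w - 1) * u ^ (-s) * (u ^ (k : ℤ) * a ^ (-k)) := by
          rw [hab]
      _ = Complex.exp (-(Real.pi : ℂ) * I * s) *
            (((crossP p.1 q.1 : ℤ) : ℂ) ^ (w - 1) * ((-u⁻¹) ^ s * u ^ (k : ℤ)) * a ^ (-k)) := by
          rw [hcp]; ring
  · rw [if_neg hc, if_neg hc, mul_zero]

lemma myDblEisFE (k : ℤ) (hke : Even k) (s w : ℂ) (z : ℂ) (hz : 0 < z.im) :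
    dblEis k s w z = Complex.exp (-(Real.pi : ℂ) * I * s) * dblEis k ((k : ℂ) - s) w z := by
  unfold dblEis
  calc ∑' pq : CP × CP, dblEisTerm k s w z pq
      = ∑' pq : CP × CP, Complex.exp (-(Real.pi : ℂ) * I * s) *
          dblEisTerm k ((k : ℂ) - s) w z (flipE pq) :=
        tsum_congr (myTermRel k hke s w z hz)
    _ = Complex.exp (-(Real.pi : ℂ) * I * s) *
          ∑' pq : CP × CP, dblEisTerm k ((k : ℂ) - s) w z (flipE pq) := tsum_mul_left
    _ = Complex.exp (-(Real.pi : ℂ) * I * s) *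
          ∑' pq : CP × CP, dblEisTerm k ((k : ℂ) - s) w z pq := by
        rw [flipE.tsum_eq (dblEisTerm k ((k : ℂ) - s) w z)]

/-- the functional equation `E_{s,k-s}(z,w) = e^{-iπs} E_{k-s,s}(z,w)`;
equivalently `E*_{k-s,s}(z,w) = (-1)^{k/2} E*_{s,k-s}(z,w)`. -/
theorem statement5 (k : ℤ) (hke : Even k) (s w : ℂ)
    (hs1 : 2 < s.re) (hs2 : s.re < (k : ℝ) - 2)
    (hw : w.re < min (s.re - 1) ((k : ℝ) - 1 - s.re)) :
    ∀ z : ℂ, 0 < z.im →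
      dblEis k s w z = Complex.exp (-(Real.pi : ℂ) * I * s) * dblEis k ((k : ℂ) - s) w z ∧
      dblEisStar k ((k : ℂ) - s) w z = (-1 : ℂ) ^ (k / 2) * dblEisStar k s w z := by
  intro z hz
  have h1 := myDblEisFE k hke s w z hz
  refine ⟨h1, ?_⟩
  have hexp : ∀ t : ℂ, Complex.exp t ≠ 0 := Complex.exp_ne_zero
  have h2 : dblEis k ((k : ℂ) - s) w z =
      Complex.exp ((Real.pi : ℂ) * I * s) * dblEis k s w z := by
    rw [h1, ← mul_assoc, ← Complex.exp_add]
    rw [show (Real.pi : ℂ) * I * s + -(Real.pi : ℂ) * I * s = 0 by ring, Complex.exp_zero,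
      one_mul]
  have hfac : eisFactor k ((k : ℂ) - s) w =
      Complex.exp (((k : ℂ) - 2 * s) * Real.pi * I / 2) * eisFactor k s w := by
    unfold eisFactor
    rw [show (k : ℂ) - ((k : ℂ) - s) = s by ring,
      show (1 : ℂ) - w + ((k : ℂ) - s) = 1 - w + (k : ℂ) - s by ring,
      show (1 : ℂ) - w + (k : ℂ) - ((k : ℂ) - s) = 1 - w + s by ring,
      show Complex.exp (((k : ℂ) - s) * Real.pi * I / 2) =
        Complex.exp (((k : ℂ) - 2 * s) * Real.pi * I / 2) *
          Complex.exp (s * Real.pi * I / 2) by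
        rw [← Complex.exp_add]; congr 1; ring]
    ring
  have hkey : Complex.exp (((k : ℂ) - 2 * s) * Real.pi * I / 2) *
      Complex.exp ((Real.pi : ℂ) * I * s) = (-1 : ℂ) ^ (k / 2) := by
    rw [← Complex.exp_add]
    obtain ⟨m, hm⟩ := hke
    have hk2 : k / 2 = m := by omega
    have hkc : (k : ℂ) = 2 * m := by
      rw [hm]; push_cast; ring
    rw [hk2, hkc,
      show (2 * (m : ℂ) - 2 * s) * Real.pi * I / 2 + (Real.pi : ℂ) * I * s =
        (m : ℂ) * ((Real.pi : ℂ) * I) by ring,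
      Complex.exp_int_mul, Complex.exp_pi_mul_I]
  rw [dblEisStar, dblEisStar, hfac, h2, hkey.symm]
  ring
end
end

section
/- Let k ∈ 2ℤ and let s, w ∈ ℂ satisfy 2 < Re(s) < k−2, Re(w) < Re(s)−1 and Re(w) < k−1−Re(s). Then for all z ∈ ℍ, ζ(1−w+s) · E_{s,k−s}(z,w) = 2 Σ_{a=1}^∞ a^{w−s−1} Σ_{b=0}^{a−1} C_k(z, s; b/a). -/
noncomputable section

open Complex Filter MeasureTheory

open Matrix

namespace St7

lemma cpow_posreal_mul {r : ℝ} (hr : 0 < r) {u : ℂ} (hu : u ≠ 0) (t : ℂ) :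
    ((r : ℂ) * u) ^ t = (r : ℂ) ^ t * u ^ t := by
  have hr' : (r : ℂ) ≠ 0 := by exact_mod_cast hr.ne'
  rw [Complex.cpow_def_of_ne_zero (mul_ne_zero hr' hu),
    Complex.cpow_def_of_ne_zero hr', Complex.cpow_def_of_ne_zero hu,
    Complex.log_ofReal_mul hr hu, ← Complex.exp_add, add_mul, Complex.ofReal_log hr.le]

/-- bottom row of an `SL2Z` matrix is coprime -/
lemma coprime_row (γ : SL2Z) : IsCoprime (γ 1 0 : ℤ) (γ 1 1 : ℤ) := by
  refine ⟨-(γ 0 1), γ 0 0, ?_⟩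
  have h := γ.2
  rw [Matrix.det_fin_two] at h
  linarith [h]

/-- the canonical coset representative with given coprime bottom row -/
def rep2 (c d : ℤ) (h : IsCoprime c d) : SL2Z :=
  ⟨!![h.choose_spec.choose, -h.choose; c, d], by
    have h2 := h.choose_spec.choose_spec
    rw [Matrix.det_fin_two_of]; linarith⟩

@[simp] lemma rep2_10 (c d : ℤ) (h : IsCoprime c d) : rep2 c d h 1 0 = c := rfl
@[simp] lemma rep2_11 (c d : ℤ) (h : IsCoprime c d) : rep2 c d h 1 1 = d := rfl

def rowQ (γ : SL2Z) : CP := ⟨(γ 1 0, γ 1 1), coprime_row γ⟩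

def repCP (p : CP) : SL2Z := rep2 p.1.1 p.1.2 p.2

@[simp] lemma repCP_10 (p : CP) : repCP p 1 0 = p.1.1 := rfl
@[simp] lemma repCP_11 (p : CP) : repCP p 1 1 = p.1.2 := rfl

lemma jP_ne_zero {p : ℤ × ℤ} (hp : IsCoprime p.1 p.2) {z : ℂ} (hz : 0 < z.im) :
    jP p z ≠ 0 := by
  intro h
  rcases eq_or_ne p.1 0 with h1 | h1
  · rw [jP, h1] at h
    simp only [Int.cast_zero, zero_mul, zero_add] at h
    rw [h1, isCoprime_zero_left] at hp
    have := Int.isUnit_iff.mp hp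
    rcases this with h2 | h2 <;> simp [h2] at h
  · have := congrArg Complex.im h
    simp only [jP, Complex.add_im, Complex.mul_im, Complex.intCast_im, Complex.intCast_re,
      Complex.zero_im, zero_mul, add_zero, mul_zero] at this
    have : (p.1 : ℝ) * z.im = 0 := by linarith [this]
    rcases mul_eq_zero.mp this with h2 | h2
    · exact h1 (by exact_mod_cast h2)
    · exact hz.ne' h2

lemma jP_abs_pos {p : ℤ × ℤ} (hp : IsCoprime p.1 p.2) {z : ℂ} (hz : 0 < z.im) :
    0 < ‖jP p z‖ := by
  simpa using (norm_pos_iff.mpr (jP_ne_zero hp hz))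

/-- key inequality : `c_{γδ⁻¹} y ≤ |j(γ,z)| |j(δ,z)|` -/
lemma cross_mul_im_le (p q : ℤ × ℤ) {z : ℂ} (hz : 0 < z.im) :
    (crossP p q : ℝ) * z.im ≤ ‖jP p z‖ * ‖jP q z‖ := by
  have h1 : (crossP p q : ℝ) * z.im = (jP p z * (starRingEnd ℂ) (jP q z)).im := by
    simp only [jP, crossP, Complex.mul_im, Complex.conj_re, Complex.conj_im, Complex.add_re,
      Complex.add_im, Complex.mul_re, Complex.intCast_re, Complex.intCast_im]
    push_cast
    ring
  rw [h1]
  calc (jP p z * (starRingEnd ℂ) (jP q z)).im ≤ |(jP p z * (starRingEnd ℂ) (jP q z)).im| :=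
        le_abs_self _
    _ ≤ ‖jP p z * (starRingEnd ℂ) (jP q z)‖ := Complex.abs_im_le_norm _
    _ = ‖jP p z‖ * ‖jP q z‖ := by
        rw [norm_mul, Complex.norm_conj]

end St7

namespace St7

lemma actZ_im_eq (γ : SL2Z) (z : ℂ) :
    (actZ γ z).im = z.im / Complex.normSq (jZ γ z) := by
  have hdet := γ.2
  rw [Matrix.det_fin_two] at hdet
  have hd : ((γ 0 0 : ℤ) : ℝ) * ((γ 1 1 : ℤ) : ℝ) - ((γ 0 1 : ℤ) : ℝ) * ((γ 1 0 : ℤ) : ℝ) = 1 := by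
    exact_mod_cast congrArg (fun t : ℤ => (t : ℝ)) hdet
  rw [actZ, Complex.div_im, div_sub_div_same]
  congr 1
  simp only [jZ, Complex.add_im, Complex.add_re, Complex.mul_re, Complex.mul_im,
    Complex.intCast_re, Complex.intCast_im]
  linear_combination z.im * hd

lemma actZ_im_pos (γ : SL2Z) {z : ℂ} (hz : 0 < z.im) : 0 < (actZ γ z).im := by
  have hne : jZ γ z ≠ 0 := jP_ne_zero (p := (γ 1 0, γ 1 1)) (coprime_row γ) hz
  rw [actZ_im_eq]
  exact div_pos hz (Complex.normSq_pos.mpr hne)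

lemma actZ_add_real_ne_zero (γ : SL2Z) {z : ℂ} (hz : 0 < z.im) (x : ℝ) :
    actZ γ z + (x : ℂ) ≠ 0 := by
  intro h
  have := congrArg Complex.im h
  simp only [Complex.add_im, Complex.ofReal_im, add_zero, Complex.zero_im] at this
  exact (actZ_im_pos γ hz).ne' this

lemma SL2_mul_apply (γ δ : SL2Z) (i j : Fin 2) :
    (γ * δ) i j = γ i 0 * δ 0 j + γ i 1 * δ 1 j := by
  show ((γ * δ : SL2Z) : Matrix (Fin 2) (Fin 2) ℤ) i j = _
  rw [Matrix.SpecialLinearGroup.coe_mul, Matrix.mul_apply, Fin.sum_univ_two]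

lemma SL2_inv_00 (A : SL2Z) : A⁻¹ 0 0 = A 1 1 := by
  rw [Matrix.SpecialLinearGroup.SL2_inv_expl]; rfl
lemma SL2_inv_01 (A : SL2Z) : A⁻¹ 0 1 = -A 0 1 := by
  rw [Matrix.SpecialLinearGroup.SL2_inv_expl]; rfl
lemma SL2_inv_10 (A : SL2Z) : A⁻¹ 1 0 = -A 1 0 := by
  rw [Matrix.SpecialLinearGroup.SL2_inv_expl]; rfl
lemma SL2_inv_11 (A : SL2Z) : A⁻¹ 1 1 = A 0 0 := by
  rw [Matrix.SpecialLinearGroup.SL2_inv_expl]; rfl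

def Tn (n : ℤ) : SL2Z := ⟨!![1, n; 0, 1], by rw [Matrix.det_fin_two_of]; ring⟩

@[simp] lemma Tn_00 (n : ℤ) : Tn n 0 0 = 1 := rfl
@[simp] lemma Tn_01 (n : ℤ) : Tn n 0 1 = n := rfl
@[simp] lemma Tn_10 (n : ℤ) : Tn n 1 0 = 0 := rfl
@[simp] lemma Tn_11 (n : ℤ) : Tn n 1 1 = 1 := rfl

lemma det_entries (A : SL2Z) : A 0 0 * A 1 1 - A 0 1 * A 1 0 = 1 := by
  have := A.2; rwa [Matrix.det_fin_two] at this

lemma eq_Tn_mul (γ δ : SL2Z) (h0 : γ 1 0 = δ 1 0) (h1 : γ 1 1 = δ 1 1) :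
    γ = Tn ((γ * δ⁻¹) 0 1) * δ := by
  have key : γ * δ⁻¹ = Tn ((γ * δ⁻¹) 0 1) := by
    have hdd := det_entries δ
    have e10 : (γ * δ⁻¹) 1 0 = 0 := by
      rw [SL2_mul_apply, SL2_inv_00, SL2_inv_10, h0, h1]; ring
    have e11 : (γ * δ⁻¹) 1 1 = 1 := by
      rw [SL2_mul_apply, SL2_inv_01, SL2_inv_11, h0, h1]; linarith [hdd]
    have e00 : (γ * δ⁻¹) 0 0 = 1 := by
      have h := det_entries (γ * δ⁻¹)
      rw [e10, e11] at h; linarith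
    apply Subtype.ext
    ext i j
    fin_cases i <;> fin_cases j
    · exact e00
    · rfl
    · exact e10
    · exact e11
  conv_lhs => rw [show γ = γ * δ⁻¹ * δ by group, key]

lemma summable_jP {r : ℝ} (hr : 2 < r) {z : ℂ} (hz : 0 < z.im) :
    Summable fun p : CP => ‖jP p.1 z‖ ^ (-r) := by
  have h1 : Summable fun x : Fin 2 → ℤ =>
      ‖(x 0 : ℂ) * z + (x 1 : ℂ)‖ ^ (-r) := by
    refine Summable.of_nonneg_of_le
      (fun x => Real.rpow_nonneg (norm_nonneg _) _)
      (fun x => ?_)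
      ((EisensteinSeries.summable_one_div_norm_rpow hr).mul_left
        (EisensteinSeries.r ⟨z, hz⟩ ^ (-r)))
    exact EisensteinSeries.summand_bound ⟨z, hz⟩ (by linarith) x
  have h2 := h1.comp_injective (i := fun p : CP => ![p.1.1, p.1.2]) ?_
  · refine h2.congr fun p => ?_
    simp [jP, Function.comp]
  · intro p q h
    have h0 := congrFun h 0
    have h1' := congrFun h 1
    simp only [Matrix.cons_val_zero, Matrix.cons_val_one, Matrix.head_cons] at h0 h1'
    exact Subtype.ext (Prod.ext h0 h1')

end St7

namespace St7

def tEx (w : ℂ) : ℝ := max (w.re - 1) 0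

lemma tEx_nonneg (w : ℂ) : 0 ≤ tEx w := le_max_right _ _

lemma dblEisTerm_bound (k : ℤ) (s w : ℂ) {z : ℂ} (hz : 0 < z.im) (pq : CP × CP) :
    ‖dblEisTerm k s w z pq‖ ≤ Real.exp (Real.pi * |s.im|) * z.im ^ (-(tEx w)) *
      (‖jP pq.1.1 z‖ ^ (tEx w - s.re) *
       ‖jP pq.2.1 z‖ ^ (tEx w + s.re - (k : ℝ))) := by
  obtain ⟨p, q⟩ := pq
  set P := ‖jP p.1 z‖ with hPdef
  set Q := ‖jP q.1 z‖ with hQdef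
  have hP : 0 < P := jP_abs_pos p.2 hz
  have hQ : 0 < Q := jP_abs_pos q.2 hz
  set t := tEx w with htdef
  have ht : 0 ≤ t := tEx_nonneg w
  rw [dblEisTerm]
  by_cases hc : 0 < crossP p.1 q.1
  swap
  · rw [if_neg hc, norm_zero]
    positivity
  rw [if_pos hc]
  set n : ℤ := crossP p.1 q.1
  have hn1 : (1 : ℝ) ≤ (n : ℝ) := by exact_mod_cast hc
  have hnR : (0 : ℝ) < (n : ℝ) := by linarith
  -- norms of the three factors
  have e1 : ‖((n : ℤ) : ℂ) ^ (w - 1)‖ = (n : ℝ) ^ (w.re - 1) := by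
    have : ((n : ℤ) : ℂ) = (((n : ℤ) : ℝ) : ℂ) := by push_cast; ring
    rw [this, Complex.norm_cpow_eq_rpow_re_of_pos hnR]
    norm_num
  have e3 : ‖(jP q.1 z) ^ (-k)‖ = Q ^ (-(k : ℝ)) := by
    rw [norm_zpow, ← hQdef]
    rw [show (-(k:ℝ)) = ((-k : ℤ) : ℝ) by push_cast; ring, Real.rpow_intCast]
  have e2 : ‖(jP p.1 z / jP q.1 z) ^ (-s)‖ ≤
      (P / Q) ^ (-s.re) * Real.exp (Real.pi * |s.im|) := by
    refine le_trans (Complex.norm_cpow_le _ _) ?_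
    rw [norm_div, ← hPdef, ← hQdef, Complex.neg_re, div_eq_mul_inv, ← Real.exp_neg]
    refine mul_le_mul_of_nonneg_left (Real.exp_le_exp.mpr ?_) (by positivity)
    set A := (jP p.1 z / jP q.1 z).arg with hA
    have h1 : |A| ≤ Real.pi := Complex.abs_arg_le_pi _
    calc -(A * (-s).im) = A * s.im := by rw [Complex.neg_im]; ring
      _ ≤ |A * s.im| := le_abs_self _
      _ = |A| * |s.im| := abs_mul _ _
      _ ≤ Real.pi * |s.im| := mul_le_mul_of_nonneg_right h1 (abs_nonneg _)
  -- bound for the cross factor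
  have ecross : (n : ℝ) ^ (w.re - 1) ≤ (P * Q / z.im) ^ t := by
    have hle : (n : ℝ) ≤ P * Q / z.im := by
      rw [le_div_iff₀ hz]
      exact cross_mul_im_le p.1 q.1 hz
    calc (n : ℝ) ^ (w.re - 1) ≤ (n : ℝ) ^ t :=
          Real.rpow_le_rpow_of_exponent_le hn1 (le_max_left _ _)
      _ ≤ (P * Q / z.im) ^ t := Real.rpow_le_rpow hnR.le hle ht
  -- combine
  calc ‖((n : ℤ) : ℂ) ^ (w - 1) * (jP p.1 z / jP q.1 z) ^ (-s) * (jP q.1 z) ^ (-k)‖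
      = ‖((n : ℤ) : ℂ) ^ (w - 1)‖ * ‖(jP p.1 z / jP q.1 z) ^ (-s)‖ * ‖(jP q.1 z) ^ (-k)‖ := by
        rw [norm_mul, norm_mul]
    _ ≤ ((P * Q / z.im) ^ t) * ((P / Q) ^ (-s.re) * Real.exp (Real.pi * |s.im|)) *
        (Q ^ (-(k : ℝ))) := by
        rw [e1, e3]
        refine mul_le_mul_of_nonneg_right (mul_le_mul ecross e2 (norm_nonneg _) (by positivity)) ?_
        positivity
    _ = Real.exp (Real.pi * |s.im|) * z.im ^ (-t) * (P ^ (t - s.re) * Q ^ (t + s.re - (k : ℝ))) := by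
        rw [Real.div_rpow (by positivity) hz.le, Real.mul_rpow hP.le hQ.le,
          Real.div_rpow hP.le hQ.le]
        simp only [Real.rpow_sub hP, Real.rpow_sub hQ, Real.rpow_add hQ,
          Real.rpow_neg hz.le, Real.rpow_neg hP.le, Real.rpow_neg hQ.le]
        have h1 : P ^ s.re ≠ 0 := by positivity
        have h2 : Q ^ s.re ≠ 0 := by positivity
        have h3 : Q ^ (k:ℝ) ≠ 0 := by positivity
        have h4 : z.im ^ t ≠ 0 := by positivity
        field_simp

end St7

namespace St7

lemma summable_norm_dblEisTerm (k : ℤ) (s w : ℂ) (hs1 : 2 < s.re) (hs2 : s.re < (k : ℝ) - 2)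
    (hw1 : w.re < s.re - 1) (hw2 : w.re < (k : ℝ) - 1 - s.re) {z : ℂ} (hz : 0 < z.im) :
    Summable fun pq : CP × CP => ‖dblEisTerm k s w z pq‖ := by
  have ht1 : 2 < s.re - tEx w := by
    have : tEx w < s.re - 2 := max_lt (by linarith) (by linarith)
    linarith
  have ht2 : 2 < (k : ℝ) - s.re - tEx w := by
    have : tEx w < (k : ℝ) - s.re - 2 := max_lt (by linarith) (by linarith)
    linarith
  have base := (summable_jP ht1 hz).mul_of_nonneg (summable_jP ht2 hz)
      (fun _ => Real.rpow_nonneg (norm_nonneg _) _)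
      (fun _ => Real.rpow_nonneg (norm_nonneg _) _)
  have base2 := base.mul_left (Real.exp (Real.pi * |s.im|) * z.im ^ (-(tEx w)))
  simp only [show -(s.re - tEx w) = tEx w - s.re by ring,
    show -((k : ℝ) - s.re - tEx w) = tEx w + s.re - (k : ℝ) by ring] at base2
  exact Summable.of_nonneg_of_le (fun pq => norm_nonneg _)
    (fun pq => dblEisTerm_bound k s w hz pq) base2

lemma summable_norm_gpow (s w : ℂ) (h : w.re < s.re) :
    Summable fun g : ℕ+ => ‖((g : ℕ) : ℂ) ^ (w - s - 1)‖ := by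
  have h1 : Summable fun n : ℕ => (n : ℝ) ^ (w.re - s.re - 1) :=
    Real.summable_nat_rpow.mpr (by linarith)
  have h2 := h1.comp_injective (fun (a b : ℕ+) (hab : (a:ℕ) = (b:ℕ)) => PNat.coe_injective hab)
  refine h2.congr fun g => ?_
  have hg : (0 : ℝ) < ((g : ℕ) : ℝ) := by exact_mod_cast g.2
  rw [Function.comp_apply,
    show ((g : ℕ) : ℂ) = ((((g : ℕ) : ℝ)) : ℂ) by push_cast; ring,
    Complex.norm_cpow_eq_rpow_re_of_pos hg]
  norm_num

def Ffun (k : ℤ) (s w z : ℂ) (v : ℕ+ × (CP × CP)) : ℂ :=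
  (((v.1 : ℕ)) : ℂ) ^ (w - s - 1) * dblEisTerm k s w z v.2

def Gfun (k : ℤ) (s w z : ℂ) (x : (_a : ℕ+) × (Fin (_a : ℕ) × SL2Z)) : ℂ :=
  (((x.1 : ℕ)) : ℂ) ^ (w - s - 1) *
    (actZ x.2.2 z + ((x.2.1 : ℕ) : ℂ) / ((x.1 : ℕ) : ℂ)) ^ (-s) * (jZ x.2.2 z) ^ (-k)

end St7

namespace St7

abbrev Idx := (_a : ℕ+) × (Fin ((_a : ℕ+) : ℕ) × SL2Z)

def shiftOf (γ : SL2Z) : ℤ := (γ * (repCP (rowQ γ))⁻¹) 0 1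

lemma rowQ_repCP (q : CP) : rowQ (repCP q) = q := by
  apply Subtype.ext
  show (repCP q 1 0, repCP q 1 1) = q.1
  rw [repCP_10, repCP_11]

lemma row_eq_repCP (γ : SL2Z) :
    γ 1 0 = repCP (rowQ γ) 1 0 ∧ γ 1 1 = repCP (rowQ γ) 1 1 := ⟨rfl, rfl⟩

lemma gamma_eq_Tn (γ : SL2Z) : γ = Tn (shiftOf γ) * repCP (rowQ γ) :=
  eq_Tn_mul γ (repCP (rowQ γ)) rfl rfl

def DOf (x : Idx) : ℤ := shiftOf x.2.2 * ((x.1 : ℕ) : ℤ) + ((x.2.1 : ℕ) : ℤ)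

def gOf (x : Idx) : ℕ := Int.gcd ((x.1 : ℕ) : ℤ) (DOf x)

lemma gOf_pos (x : Idx) : 0 < gOf x := by
  have : ((x.1 : ℕ) : ℤ) ≠ 0 := by exact_mod_cast x.1.ne_zero
  exact Int.gcd_pos_of_ne_zero_left _ this

def n0Of (x : Idx) : ℤ := ((x.1 : ℕ) : ℤ) / (gOf x : ℤ)
def dMOf (x : Idx) : ℤ := DOf x / (gOf x : ℤ)

lemma a_eq (x : Idx) : ((x.1 : ℕ) : ℤ) = (gOf x : ℤ) * n0Of x :=
  (Int.mul_ediv_cancel' (Int.gcd_dvd_left _ _)).symm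

lemma D_eq (x : Idx) : DOf x = (gOf x : ℤ) * dMOf x :=
  (Int.mul_ediv_cancel' (Int.gcd_dvd_right _ _)).symm

lemma n0_pos (x : Idx) : 0 < n0Of x := by
  have h1 : (0 : ℤ) < ((x.1 : ℕ) : ℤ) := by exact_mod_cast x.1.2
  have h2 : (0 : ℤ) < (gOf x : ℤ) := by exact_mod_cast gOf_pos x
  nlinarith [a_eq x]

lemma copOf (x : Idx) : IsCoprime (n0Of x) (dMOf x) := by
  rw [Int.isCoprime_iff_gcd_eq_one]
  exact Int.gcd_div_gcd_div_gcd (by exact_mod_cast gOf_pos x)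

def MOf (x : Idx) : SL2Z := rep2 (n0Of x) (dMOf x) (copOf x)

def pOf (x : Idx) : CP := rowQ (MOf x * repCP (rowQ x.2.2))

def Phi (x : Idx) : ℕ+ × (CP × CP) :=
  (⟨gOf x, gOf_pos x⟩, (pOf x, rowQ x.2.2))

lemma crossP_rowQ (M δ : SL2Z) : crossP (rowQ (M * δ)).1 (rowQ δ).1 = M 1 0 := by
  show (M * δ) 1 0 * δ 1 1 - (M * δ) 1 1 * δ 1 0 = M 1 0
  rw [SL2_mul_apply, SL2_mul_apply]
  linear_combination M 1 0 * det_entries δ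

lemma dM_rowQ (M δ : SL2Z) :
    (rowQ (M * δ)).1.2 * δ 0 0 - (rowQ (M * δ)).1.1 * δ 0 1 = M 1 1 := by
  show (M * δ) 1 1 * δ 0 0 - (M * δ) 1 0 * δ 0 1 = M 1 1
  rw [SL2_mul_apply, SL2_mul_apply]
  linear_combination M 1 1 * det_entries δ

lemma cross_pOf (x : Idx) : crossP (pOf x).1 (rowQ x.2.2).1 = n0Of x := by
  have h := crossP_rowQ (MOf x) (repCP (rowQ x.2.2))
  rw [rowQ_repCP] at h
  rw [pOf, h]
  rfl

lemma dM_pOf (x : Idx) :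
    (pOf x).1.2 * repCP (rowQ x.2.2) 0 0 - (pOf x).1.1 * repCP (rowQ x.2.2) 0 1 = dMOf x := by
  have h := dM_rowQ (MOf x) (repCP (rowQ x.2.2))
  rw [pOf]
  exact h

end St7

namespace St7

lemma term_eq (k : ℤ) (s w : ℂ) {z : ℂ} (hz : 0 < z.im) (x : Idx) :
    Ffun k s w z (Phi x) = Gfun k s w z x := by
  obtain ⟨a, b, γ⟩ := x
  set x : Idx := (⟨a, b, γ⟩ : Idx) with hx
  set δ := repCP (rowQ γ) with hδ
  have hJq : jP (rowQ γ).1 z ≠ 0 := jP_ne_zero (rowQ γ).2 hz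
  have haC : ((a : ℕ) : ℂ) ≠ 0 := by exact_mod_cast a.ne_zero
  -- entries of γ in terms of δ and the shift
  have hγ00 : (γ 0 0 : ℤ) = δ 0 0 + shiftOf γ * δ 1 0 := by
    conv_lhs => rw [gamma_eq_Tn γ]
    rw [SL2_mul_apply, ← hδ, Tn_00, Tn_01]; ring
  have hγ01 : (γ 0 1 : ℤ) = δ 0 1 + shiftOf γ * δ 1 1 := by
    conv_lhs => rw [gamma_eq_Tn γ]
    rw [SL2_mul_apply, ← hδ, Tn_00, Tn_01]; ring
  -- entries of pOf x
  have hp1 : (pOf x).1.1 = n0Of x * δ 0 0 + dMOf x * δ 1 0 := by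
    show (MOf x * δ) 1 0 = _
    rw [SL2_mul_apply]; rfl
  have hp2 : (pOf x).1.2 = n0Of x * δ 0 1 + dMOf x * δ 1 1 := by
    show (MOf x * δ) 1 1 = _
    rw [SL2_mul_apply]; rfl
  -- the scalar relation
  have hsc : dMOf x * ((a : ℕ) : ℤ) = n0Of x * (shiftOf γ * ((a : ℕ) : ℤ) + ((b : ℕ) : ℤ)) := by
    have h1 := a_eq x
    have h2 := D_eq x
    have h3 : DOf x = shiftOf γ * ((a : ℕ) : ℤ) + ((b : ℕ) : ℤ) := rfl
    rw [← h3, h1, h2]; ring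
  -- the u variable
  set u : ℂ := actZ γ z + ((b : ℕ) : ℂ) / ((a : ℕ) : ℂ) with hu_def
  have hu : u ≠ 0 := by
    have hcast : Complex.ofReal (((b : ℕ) : ℝ) / ((a : ℕ) : ℝ)) = ((b : ℕ) : ℂ) / ((a : ℕ) : ℂ) := by
      push_cast; ring
    rw [hu_def, ← hcast]
    exact actZ_add_real_ne_zero γ hz _
  -- the division identity
  have hdiv : jP (pOf x).1 z / jP (rowQ γ).1 z = ((n0Of x : ℤ) : ℂ) * u := by
    rw [div_eq_iff hJq]
    have hjp : jP (pOf x).1 z =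
        ((n0Of x : ℤ) : ℂ) * (((δ 0 0 : ℤ) : ℂ) * z + ((δ 0 1 : ℤ) : ℂ)) +
        ((dMOf x : ℤ) : ℂ) * (((δ 1 0 : ℤ) : ℂ) * z + ((δ 1 1 : ℤ) : ℂ)) := by
      rw [jP, hp1, hp2]; push_cast; ring
    have hact : actZ γ z = ((((δ 0 0 : ℤ) : ℂ) + ((shiftOf γ : ℤ) : ℂ) * ((δ 1 0 : ℤ) : ℂ)) * z +
        (((δ 0 1 : ℤ) : ℂ) + ((shiftOf γ : ℤ) : ℂ) * ((δ 1 1 : ℤ) : ℂ))) / jP (rowQ γ).1 z := by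
      rw [actZ]
      congr 1
      rw [show ((γ 0 0 : ℤ) : ℂ) = (((δ 0 0 + shiftOf γ * δ 1 0 : ℤ) : ℤ) : ℂ) by
          exact_mod_cast congrArg (fun t : ℤ => (t : ℂ)) hγ00,
        show ((γ 0 1 : ℤ) : ℂ) = (((δ 0 1 + shiftOf γ * δ 1 1 : ℤ) : ℤ) : ℂ) by
          exact_mod_cast congrArg (fun t : ℤ => (t : ℂ)) hγ01]
      push_cast; ring
    have hJ : jP (rowQ γ).1 z = ((δ 1 0 : ℤ) : ℂ) * z + ((δ 1 1 : ℤ) : ℂ) := rfl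
    rw [hjp, hu_def, hact, hJ]
    rw [hJ] at hJq
    have hscC : ((dMOf x : ℤ) : ℂ) * ((a : ℕ) : ℂ) =
        ((n0Of x : ℤ) : ℂ) * (((shiftOf γ : ℤ) : ℂ) * ((a : ℕ) : ℂ) + ((b : ℕ) : ℂ)) := by
      exact_mod_cast congrArg (fun t : ℤ => (t : ℂ)) hsc
    have hJq' : z * ((δ 1 0 : ℤ) : ℂ) + ((δ 1 1 : ℤ) : ℂ) ≠ 0 := by rwa [mul_comm] at hJq
    field_simp
    linear_combination (((δ 1 0 : ℤ) : ℂ) * z + ((δ 1 1 : ℤ) : ℂ)) * hscC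
  -- now the main computation
  have hcross : crossP (pOf x).1 (rowQ γ).1 = n0Of x := cross_pOf x
  have hcpos : 0 < crossP (pOf x).1 (rowQ γ).1 := by rw [hcross]; exact n0_pos x
  have hn0R : (0 : ℝ) < ((n0Of x : ℤ) : ℝ) := by exact_mod_cast n0_pos x
  have hn0C : ((n0Of x : ℤ) : ℂ) ≠ 0 := by exact_mod_cast (n0_pos x).ne'
  have hgR : (0 : ℝ) ≤ ((gOf x : ℕ) : ℝ) := by positivity
  show ((gOf x : ℕ) : ℂ) ^ (w - s - 1) * dblEisTerm k s w z (pOf x, rowQ γ) = _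
  rw [dblEisTerm]
  simp only
  rw [if_pos hcpos, hcross, hdiv]
  have hmul : ((n0Of x : ℤ) : ℂ) * u = (((n0Of x : ℤ) : ℝ) : ℂ) * u := by push_cast; ring
  rw [hmul, cpow_posreal_mul hn0R hu]
  have haC2 : ((a : ℕ) : ℂ) ^ (w - s - 1) =
      ((gOf x : ℕ) : ℂ) ^ (w - s - 1) * ((n0Of x : ℤ) : ℂ) ^ (w - s - 1) := by
    have h1 : ((a : ℕ) : ℂ) = (((gOf x : ℕ) : ℝ) : ℂ) * (((n0Of x : ℤ) : ℝ) : ℂ) := by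
      have h' := a_eq x
      have hxf : ((x.fst : ℕ) : ℤ) = ((a : ℕ) : ℤ) := rfl
      rw [hxf] at h'
      exact_mod_cast h'
    rw [h1, Complex.mul_cpow_ofReal_nonneg hgR hn0R.le]
    push_cast; ring
  have hcomb : ((n0Of x : ℤ) : ℂ) ^ (w - 1) * ((((n0Of x : ℤ) : ℝ)) : ℂ) ^ (-s) =
      ((n0Of x : ℤ) : ℂ) ^ (w - s - 1) := by
    have hcast : ((((n0Of x : ℤ) : ℝ)) : ℂ) = ((n0Of x : ℤ) : ℂ) := by push_cast; ring
    rw [hcast, ← Complex.cpow_add _ _ hn0C]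
    congr 1; ring
  have hjZ : jZ γ z = jP (rowQ γ).1 z := rfl
  rw [Gfun]
  rw [hjZ, haC2, ← hu_def, ← hcomb]
  ring

end St7

namespace St7

lemma Phi_inj : Function.Injective Phi := by
  intro ⟨a, b, γ⟩ ⟨a', b', γ'⟩ h
  have hg : gOf ⟨a, b, γ⟩ = gOf ⟨a', b', γ'⟩ := by
    have := congrArg (fun v : ℕ+ × (CP × CP) => (v.1 : ℕ)) h
    exact this
  have hq : rowQ γ = rowQ γ' := congrArg (fun v : ℕ+ × (CP × CP) => v.2.2) h
  have hp : pOf ⟨a, b, γ⟩ = pOf ⟨a', b', γ'⟩ := congrArg (fun v : ℕ+ × (CP × CP) => v.2.1) h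
  have hδ : repCP (rowQ γ) = repCP (rowQ γ') := congrArg repCP hq
  have hcr : crossP (pOf ⟨a, b, γ⟩).1 (rowQ γ).1 = n0Of ⟨a, b, γ⟩ := cross_pOf _
  have hcr' : crossP (pOf ⟨a', b', γ'⟩).1 (rowQ γ').1 = n0Of ⟨a', b', γ'⟩ := cross_pOf _
  have hn0 : n0Of ⟨a, b, γ⟩ = n0Of ⟨a', b', γ'⟩ := by
    rw [← hcr, ← hcr', hp, hq]
  have haeq : a = a' := by
    have e1 : ((a : ℕ) : ℤ) = (gOf ⟨a, b, γ⟩ : ℤ) * n0Of ⟨a, b, γ⟩ := a_eq ⟨a, b, γ⟩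
    have e2 : ((a' : ℕ) : ℤ) = (gOf ⟨a', b', γ'⟩ : ℤ) * n0Of ⟨a', b', γ'⟩ := a_eq ⟨a', b', γ'⟩
    have : ((a : ℕ) : ℤ) = ((a' : ℕ) : ℤ) := by rw [e1, e2, hg, hn0]
    exact PNat.coe_injective (by exact_mod_cast this)
  have hdM : dMOf ⟨a, b, γ⟩ = dMOf ⟨a', b', γ'⟩ := by
    have e1 : (pOf ⟨a, b, γ⟩).1.2 * repCP (rowQ γ) 0 0 -
        (pOf ⟨a, b, γ⟩).1.1 * repCP (rowQ γ) 0 1 = dMOf ⟨a, b, γ⟩ := dM_pOf _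
    have e2 : (pOf ⟨a', b', γ'⟩).1.2 * repCP (rowQ γ') 0 0 -
        (pOf ⟨a', b', γ'⟩).1.1 * repCP (rowQ γ') 0 1 = dMOf ⟨a', b', γ'⟩ := dM_pOf _
    rw [← e1, ← e2, hp, hδ]
  have hD : DOf ⟨a, b, γ⟩ = DOf ⟨a', b', γ'⟩ := by
    rw [D_eq, D_eq]
    have : (gOf (⟨a, b, γ⟩ : Idx) : ℤ) = (gOf (⟨a', b', γ'⟩ : Idx) : ℤ) := by exact_mod_cast hg
    rw [this, hdM]
  have eD1 : DOf ⟨a, b, γ⟩ = shiftOf γ * ((a : ℕ) : ℤ) + ((b : ℕ) : ℤ) := rfl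
  have eD2 : DOf ⟨a', b', γ'⟩ = shiftOf γ' * ((a' : ℕ) : ℤ) + ((b' : ℕ) : ℤ) := rfl
  have hbb : ((b : ℕ) : ℤ) = ((b' : ℕ) : ℤ) := by
    have h1 : DOf ⟨a, b, γ⟩ % ((a : ℕ) : ℤ) = ((b : ℕ) : ℤ) := by
      rw [eD1, add_comm, Int.add_mul_emod_self_right]
      exact Int.emod_eq_of_lt (by positivity) (by exact_mod_cast b.isLt)
    have h2 : DOf ⟨a', b', γ'⟩ % ((a' : ℕ) : ℤ) = ((b' : ℕ) : ℤ) := by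
      rw [eD2, add_comm, Int.add_mul_emod_self_right]
      exact Int.emod_eq_of_lt (by positivity) (by exact_mod_cast b'.isLt)
    rw [← h1, ← h2, hD, haeq]
  have hshift : shiftOf γ = shiftOf γ' := by
    have hane : ((a : ℕ) : ℤ) ≠ 0 := by
      have := a.2; positivity
    have haZ : ((a : ℕ) : ℤ) = ((a' : ℕ) : ℤ) := by rw [haeq]
    have : shiftOf γ * ((a : ℕ) : ℤ) = shiftOf γ' * ((a : ℕ) : ℤ) := by
      have h5 := hD
      rw [eD1, eD2, ← haZ, hbb] at h5
      linarith [h5]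
    exact mul_right_cancel₀ hane this
  have hγ : γ = γ' := by
    rw [gamma_eq_Tn γ, gamma_eq_Tn γ', hshift, hq]
  subst haeq
  have hbF : b = b' := Fin.ext (by exact_mod_cast hbb)
  rw [hbF, hγ]

end St7

namespace St7

lemma Phi_range (k : ℤ) (s w z : ℂ) :
    Function.support (Ffun k s w z) ⊆ Set.range Phi := by
  rintro ⟨g0, p, q⟩ hv
  have hterm : dblEisTerm k s w z (p, q) ≠ 0 := by
    intro h0
    apply hv
    show ((g0 : ℕ) : ℂ) ^ (w - s - 1) * dblEisTerm k s w z (p, q) = 0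
    rw [h0, mul_zero]
  have hc : 0 < crossP p.1 q.1 := by
    by_contra hcon
    exact hterm (by rw [dblEisTerm, if_neg hcon])
  set c : ℤ := crossP p.1 q.1 with hcdef
  set δ : SL2Z := repCP q with hδdef
  set M : SL2Z := repCP p * δ⁻¹ with hMdef
  have hM10 : M 1 0 = c := by
    rw [hMdef, SL2_mul_apply, SL2_inv_00, SL2_inv_10]
    show p.1.1 * δ 1 1 + p.1.2 * -(δ 1 0) = c
    rw [hδdef, repCP_10, repCP_11, hcdef, crossP]
    ring
  set d0 : ℤ := M 1 1 with hd0def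
  have hcop : Int.gcd c d0 = 1 := by
    have h1 := coprime_row M
    rw [hM10] at h1
    exact Int.isCoprime_iff_gcd_eq_one.mp h1
  have hMδ : M * δ = repCP p := inv_mul_cancel_right _ _
  have hg0Z : (0 : ℤ) < ((g0 : ℕ) : ℤ) := by exact_mod_cast g0.2
  set aN : ℕ := (g0 : ℕ) * c.toNat with haNdef
  have haNpos : 0 < aN := Nat.mul_pos g0.2 (by omega)
  set aPN : ℕ+ := ⟨aN, haNpos⟩ with haPN
  have haZ : ((aN : ℕ) : ℤ) = ((g0 : ℕ) : ℤ) * c := by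
    rw [haNdef]
    push_cast
    rw [Int.toNat_of_nonneg hc.le]
  have haZpos : (0 : ℤ) < ((aN : ℕ) : ℤ) := by exact_mod_cast haNpos
  set D : ℤ := ((g0 : ℕ) : ℤ) * d0 with hDdef
  set n : ℤ := D / ((aN : ℕ) : ℤ) with hndef
  set r : ℤ := D % ((aN : ℕ) : ℤ) with hrdef
  have hr0 : 0 ≤ r := Int.emod_nonneg D haZpos.ne'
  have hrlt : r < ((aN : ℕ) : ℤ) := Int.emod_lt_of_pos D haZpos
  set bF : Fin ((aPN : ℕ+) : ℕ) := ⟨r.toNat, by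
    show r.toNat < aN
    have h9 : (r.toNat : ℤ) < ((aN : ℕ) : ℤ) := by rw [Int.toNat_of_nonneg hr0]; exact hrlt
    exact_mod_cast h9⟩ with hbF
  set γ0 : SL2Z := Tn n * δ with hγ0def
  refine ⟨⟨aPN, bF, γ0⟩, ?_⟩
  -- bottom row of γ0 is q
  have e10 : γ0 1 0 = q.1.1 := by
    rw [hγ0def, SL2_mul_apply, Tn_10, Tn_11]
    show 0 * δ 0 0 + 1 * δ 1 0 = q.1.1
    rw [hδdef, repCP_10]; ring
  have e11 : γ0 1 1 = q.1.2 := by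
    rw [hγ0def, SL2_mul_apply, Tn_10, Tn_11]
    show 0 * δ 0 1 + 1 * δ 1 1 = q.1.2
    rw [hδdef, repCP_11]; ring
  have hrow : rowQ γ0 = q := by
    apply Subtype.ext
    show (γ0 1 0, γ0 1 1) = q.1
    rw [e10, e11]
  have hδback : repCP (rowQ γ0) = δ := by rw [hrow, hδdef]
  have hshift : shiftOf γ0 = n := by
    rw [shiftOf, hδback, hγ0def, mul_inv_cancel_right]
    exact Tn_01 n
  have hDOf : DOf ⟨aPN, bF, γ0⟩ = D := by
    show shiftOf γ0 * ((aN : ℕ) : ℤ) + ((r.toNat : ℕ) : ℤ) = D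
    rw [hshift, Int.toNat_of_nonneg hr0, hndef, hrdef]
    conv_lhs => rw [mul_comm]
    exact Int.mul_ediv_add_emod D ((aN : ℕ) : ℤ)
  have hgOf : gOf ⟨aPN, bF, γ0⟩ = (g0 : ℕ) := by
    show Int.gcd ((aN : ℕ) : ℤ) (DOf ⟨aPN, bF, γ0⟩) = (g0 : ℕ)
    rw [hDOf, haZ, hDdef, Int.gcd_mul_left, hcop, mul_one]
    simp
  have hn0Of : n0Of ⟨aPN, bF, γ0⟩ = c := by
    show ((aN : ℕ) : ℤ) / ((gOf ⟨aPN, bF, γ0⟩ : ℕ) : ℤ) = c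
    rw [hgOf, haZ, Int.mul_ediv_cancel_left _ hg0Z.ne']
  have hdMOf : dMOf ⟨aPN, bF, γ0⟩ = d0 := by
    show DOf ⟨aPN, bF, γ0⟩ / ((gOf ⟨aPN, bF, γ0⟩ : ℕ) : ℤ) = d0
    rw [hDOf, hgOf, hDdef, Int.mul_ediv_cancel_left _ hg0Z.ne']
  -- the p component
  have hpOf : pOf ⟨aPN, bF, γ0⟩ = p := by
    apply Subtype.ext
    show ((MOf ⟨aPN, bF, γ0⟩ * repCP (rowQ γ0)) 1 0,
      (MOf ⟨aPN, bF, γ0⟩ * repCP (rowQ γ0)) 1 1) = p.1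
    rw [hδback]
    have f10 : (MOf ⟨aPN, bF, γ0⟩ * δ) 1 0 = p.1.1 := by
      rw [SL2_mul_apply]
      have g1 : MOf ⟨aPN, bF, γ0⟩ 1 0 = c := hn0Of
      have g2 : MOf ⟨aPN, bF, γ0⟩ 1 1 = d0 := hdMOf
      rw [g1, g2, ← hM10, hd0def, ← SL2_mul_apply, hMδ, repCP_10]
    have f11 : (MOf ⟨aPN, bF, γ0⟩ * δ) 1 1 = p.1.2 := by
      rw [SL2_mul_apply]
      have g1 : MOf ⟨aPN, bF, γ0⟩ 1 0 = c := hn0Of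
      have g2 : MOf ⟨aPN, bF, γ0⟩ 1 1 = d0 := hdMOf
      rw [g1, g2, ← hM10, hd0def, ← SL2_mul_apply, hMδ, repCP_11]
    rw [f10, f11]
  -- assemble
  show (⟨gOf ⟨aPN, bF, γ0⟩, gOf_pos _⟩, (pOf ⟨aPN, bF, γ0⟩, rowQ γ0)) = (g0, (p, q))
  refine Prod.ext ?_ (Prod.ext ?_ ?_)
  · exact PNat.coe_injective hgOf
  · exact hpOf
  · exact hrow

end St7


open St7 in
/-- `ζ(1-w+s) E_{s,k-s}(z,w) = 2 Σ_{a≥1} a^{w-s-1} Σ_{0≤b<a} C_k(z,s;b/a)`. -/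
theorem statement7 (k : ℤ) (hke : Even k) (s w : ℂ)
    (hs1 : 2 < s.re) (hs2 : s.re < (k : ℝ) - 2)
    (hw1 : w.re < s.re - 1) (hw2 : w.re < (k : ℝ) - 1 - s.re) (z : ℂ) (hz : 0 < z.im) :
    (Summable fun a : ℕ+ => ((a : ℕ) : ℂ) ^ (w - s - 1) *
      ∑ b ∈ Finset.range (a : ℕ), cohen k s ((b : ℚ) / ((a : ℕ) : ℚ)) z) ∧
    riemannZeta (1 - w + s) * dblEis k s w z =
      2 * ∑' a : ℕ+, ((a : ℕ) : ℂ) ^ (w - s - 1) *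
        ∑ b ∈ Finset.range (a : ℕ), cohen k s ((b : ℚ) / ((a : ℕ) : ℚ)) z := by
  have hw0 : w.re < s.re := by linarith
  have hnormE : Summable fun pq : CP × CP => ‖dblEisTerm k s w z pq‖ :=
    summable_norm_dblEisTerm k s w hs1 hs2 hw1 hw2 hz
  have hnormg : Summable fun g : ℕ+ => ‖((g : ℕ) : ℂ) ^ (w - s - 1)‖ :=
    summable_norm_gpow s w hw0
  have hF : Summable (Ffun k s w z) :=
    (Summable.of_norm (hnormg.mul_norm hnormE)).congr (fun v => rfl)
  have hG : Summable (Gfun k s w z) :=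
    (hF.comp_injective Phi_inj).congr (fun x => term_eq k s w hz x)
  have hTsum : ∑' v, Ffun k s w z v = ∑' x, Gfun k s w z x := by
    rw [← Phi_inj.tsum_eq (Phi_range k s w z)]
    exact tsum_congr (fun x => term_eq k s w hz x)
  have hzre : 1 < (1 - w + s).re := by
    simp only [Complex.add_re, Complex.sub_re, Complex.one_re]
    linarith
  have hzeta : riemannZeta (1 - w + s) = ∑' g : ℕ+, ((g : ℕ) : ℂ) ^ (w - s - 1) := by
    rw [zeta_eq_tsum_one_div_nat_cpow hzre]
    have hne : (1 - w + s) ≠ 0 := by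
      intro h0
      rw [h0] at hzre
      norm_num at hzre
    rw [← Function.Injective.tsum_eq (g := ((↑) : ℕ+ → ℕ)) PNat.coe_injective ?_]
    · refine tsum_congr fun g => ?_
      rw [one_div, ← Complex.cpow_neg]
      congr 1
      ring
    · intro nn hnn
      rcases Nat.eq_zero_or_pos nn with h0 | h0
      · exfalso
        apply hnn
        rw [h0]
        simp only [Nat.cast_zero, Complex.zero_cpow hne]
        simp
      · exact ⟨⟨nn, h0⟩, rfl⟩
  have hprod : riemannZeta (1 - w + s) * dblEis k s w z = ∑' v, Ffun k s w z v := by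
    rw [hzeta, dblEis, tsum_mul_tsum_of_summable_norm hnormg hnormE]
    exact tsum_congr fun v => rfl
  have hsigma : ∑' x, Gfun k s w z x =
      ∑' a : ℕ+, ∑' bc : Fin (a : ℕ) × SL2Z, Gfun k s w z ⟨a, bc⟩ := Summable.tsum_sigma hG
  have hfiber : ∀ a : ℕ+, ∑' bc : Fin (a : ℕ) × SL2Z, Gfun k s w z ⟨a, bc⟩ =
      2 * (((a : ℕ) : ℂ) ^ (w - s - 1) *
        ∑ b ∈ Finset.range (a : ℕ), cohen k s ((b : ℚ) / ((a : ℕ) : ℚ)) z) := by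
    intro a
    rw [Summable.tsum_prod (hG.sigma_factor a)]
    rw [tsum_fintype]
    have hterm : ∀ b : Fin (a : ℕ), ∑' γ : SL2Z, Gfun k s w z ⟨a, (b, γ)⟩ =
        ((a : ℕ) : ℂ) ^ (w - s - 1) * (2 * cohen k s (((b : ℕ) : ℚ) / ((a : ℕ) : ℚ)) z) := by
      intro b
      have hx : (((((b : ℕ) : ℚ)) / ((a : ℕ) : ℚ) : ℚ) : ℂ) = ((b : ℕ) : ℂ) / ((a : ℕ) : ℂ) := by
        push_cast; ring
      calc ∑' γ : SL2Z, Gfun k s w z ⟨a, (b, γ)⟩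
          = ∑' γ : SL2Z, ((a : ℕ) : ℂ) ^ (w - s - 1) *
            ((actZ γ z + ((b : ℕ) : ℂ) / ((a : ℕ) : ℂ)) ^ (-s) * (jZ γ z) ^ (-k)) :=
            tsum_congr (fun γ => by rw [Gfun]; ring)
        _ = ((a : ℕ) : ℂ) ^ (w - s - 1) * ∑' γ : SL2Z,
            (actZ γ z + ((b : ℕ) : ℂ) / ((a : ℕ) : ℂ)) ^ (-s) * (jZ γ z) ^ (-k) := tsum_mul_left
        _ = ((a : ℕ) : ℂ) ^ (w - s - 1) *
            (2 * cohen k s (((b : ℕ) : ℚ) / ((a : ℕ) : ℚ)) z) := by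
            rw [cohen, hx]; ring
    calc ∑ b : Fin (a : ℕ), ∑' γ : SL2Z, Gfun k s w z ⟨a, (b, γ)⟩
        = ∑ b : Fin (a : ℕ), ((a : ℕ) : ℂ) ^ (w - s - 1) *
          (2 * cohen k s (((b : ℕ) : ℚ) / ((a : ℕ) : ℚ)) z) := Finset.sum_congr rfl
            (fun b _ => hterm b)
      _ = 2 * (((a : ℕ) : ℂ) ^ (w - s - 1) *
          ∑ b : Fin (a : ℕ), cohen k s (((b : ℕ) : ℚ) / ((a : ℕ) : ℚ)) z) := by
          rw [Finset.mul_sum, Finset.mul_sum]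
          refine Finset.sum_congr rfl (fun b _ => by ring)
      _ = 2 * (((a : ℕ) : ℂ) ^ (w - s - 1) *
          ∑ b ∈ Finset.range (a : ℕ), cohen k s ((b : ℚ) / ((a : ℕ) : ℚ)) z) := by
          rw [Fin.sum_univ_eq_sum_range (fun i : ℕ => cohen k s ((i : ℚ) / ((a : ℕ) : ℚ)) z)]
  have hsum1 : Summable fun a : ℕ+ => ∑' bc : Fin (a : ℕ) × SL2Z, Gfun k s w z ⟨a, bc⟩ :=
    hG.sigma
  constructor
  · have h2 := (hsum1.mul_left (1 / 2 : ℂ)).congr (g := fun a : ℕ+ => ((a : ℕ) : ℂ) ^ (w - s - 1) *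
      ∑ b ∈ Finset.range (a : ℕ), cohen k s ((b : ℚ) / ((a : ℕ) : ℚ)) z) ?_
    · exact h2
    · intro a
      rw [hfiber a]
      ring
  · rw [hprod, hTsum, hsigma, tsum_congr hfiber, tsum_mul_left]
end
end
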